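/- arXiv:1810.01494 — 6 statements merged into one kernel-verified Lean document; each statement's English description precedes it below -/
import Mathlib

section
/- There exists a constant C > 0 such that for every L > 0 and every continuously differentiable, compactly supported function φ : ℝ² → ℝ satisfying ∫_ℝ φ(s,t) v_⋆'(t) dt = 0 for every s ∈ ℝ, one has ∫_0^L ∫_ℝ ( |∂_s φ(s,t)|² + |∂_t φ(s,t)|² − (1 − 3 v_⋆(t)²) φ(s,t)² ) dt ds ≥ C ∫_0^L ∫_ℝ ( |∂_s φ(s,t)|² + |∂_t φ(s,t)|² + φ(s,t)² ) dt ds. In particular the constant C does not depend on the width L of the stripe. -/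
noncomputable section

open Real MeasureTheory

/-- The Allen–Cahn heteroclinic `v⋆(t) = tanh(t/√2)`. -/
def vStar (t : ℝ) : ℝ := Real.tanh (t / Real.sqrt 2)

/-- Partial derivative in the first (`s`) variable. -/
def pds (φ : ℝ × ℝ → ℝ) (s t : ℝ) : ℝ := deriv (fun x => φ (x, t)) s

/-- Partial derivative in the second (`t`) variable. -/
def pdt (φ : ℝ × ℝ → ℝ) (s t : ℝ) : ℝ := deriv (fun y => φ (s, y)) t

lemma sqrt2_pos : (0:ℝ) < Real.sqrt 2 := by positivity

lemma sqrt2_sq : Real.sqrt 2 * Real.sqrt 2 = 2 := Real.mul_self_sqrt (by norm_num)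

lemma tanh_hasDerivAt (x : ℝ) : HasDerivAt Real.tanh (1 - Real.tanh x ^ 2) x := by
  have hc : Real.cosh x ≠ 0 := (Real.cosh_pos x).ne'
  have h : HasDerivAt (fun y => Real.sinh y / Real.cosh y)
      ((Real.cosh x * Real.cosh x - Real.sinh x * Real.sinh x) / Real.cosh x ^ 2) x :=
    (Real.hasDerivAt_sinh x).div (Real.hasDerivAt_cosh x) hc
  have he : (fun y => Real.sinh y / Real.cosh y) = Real.tanh :=
    funext fun y => (Real.tanh_eq_sinh_div_cosh y).symm
  rw [he] at h
  convert h using 1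
  have h1 := Real.cosh_sq_sub_sinh_sq x
  rw [Real.tanh_eq_sinh_div_cosh, div_pow]
  field_simp

lemma contDiff_tanh : ContDiff ℝ 1 Real.tanh := by
  have he : Real.tanh = fun y => Real.sinh y / Real.cosh y :=
    funext fun y => Real.tanh_eq_sinh_div_cosh y
  rw [he]
  exact Real.contDiff_sinh.div Real.contDiff_cosh (fun x => (Real.cosh_pos x).ne')

lemma vStar_contDiff : ContDiff ℝ 1 vStar :=
  contDiff_tanh.comp (contDiff_id.div_const _)

lemma vStar_continuous : Continuous vStar := vStar_contDiff.continuous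

lemma vStar_hasDerivAt (t : ℝ) :
    HasDerivAt vStar ((1 - vStar t ^ 2) / Real.sqrt 2) t := by
  have h := (tanh_hasDerivAt (t / Real.sqrt 2)).comp t
    ((hasDerivAt_id t).div_const (Real.sqrt 2))
  unfold vStar
  simpa [vStar, Function.comp_def, div_eq_mul_inv] using h

lemma deriv_vStar (t : ℝ) : deriv vStar t = (1 - vStar t ^ 2) / Real.sqrt 2 :=
  (vStar_hasDerivAt t).deriv

lemma vStar_sq_lt_one (t : ℝ) : vStar t ^ 2 < 1 := by
  have hc := Real.cosh_pos (t / Real.sqrt 2)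
  have hs := Real.sinh_sq (t / Real.sqrt 2)
  have : vStar t ^ 2 = Real.sinh (t / Real.sqrt 2) ^ 2 / Real.cosh (t / Real.sqrt 2) ^ 2 := by
    rw [vStar, Real.tanh_eq_sinh_div_cosh, div_pow]
  rw [this, div_lt_one (by positivity)]
  nlinarith

lemma one_sub_vStar_sq_pos (t : ℝ) : 0 < 1 - vStar t ^ 2 := by
  have := vStar_sq_lt_one t; linarith

/-- The integral of the derivative of a `C¹` compactly supported function vanishes. -/
lemma integral_deriv_zero {f : ℝ → ℝ} (hf : ContDiff ℝ 1 f) (hs : HasCompactSupport f) :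
    ∫ t : ℝ, deriv f t = 0 := by
  obtain ⟨M, hM⟩ := hs.isCompact.bddAbove
  have hMem : ∀ x, M + 1 ≤ x → x ∉ tsupport f := by
    intro x hx hmem
    have := hM hmem
    linarith
  have h0 : ∀ x, x ∉ Set.Iic (M + 1) → deriv f x = 0 := by
    intro x hx
    by_contra hne
    have hsup : x ∈ Function.support (deriv f) := hne
    exact hMem x (le_of_lt (by simpa using hx)) (support_deriv_subset hsup)
  calc ∫ t : ℝ, deriv f t = ∫ t in Set.Iic (M + 1), deriv f t :=
        (setIntegral_eq_integral_of_forall_compl_eq_zero h0).symm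
    _ = f (M + 1) := HasCompactSupport.integral_Iic_deriv_eq hf hs (M + 1)
    _ = 0 := image_eq_zero_of_notMem_tsupport (hMem (M + 1) le_rfl)

/-- Shift an integral by the derivative of a `C¹` compactly supported function. -/
lemma integral_shift {A B : ℝ → ℝ} (f : ℝ → ℝ) (hf : ContDiff ℝ 1 f)
    (hfs : HasCompactSupport f) (hB : Integrable B)
    (h : ∀ t, A t = B t + deriv f t) :
    ∫ t : ℝ, A t = ∫ t : ℝ, B t := by
  have hd : Integrable (deriv f) :=
    (hf.continuous_deriv le_rfl).integrable_of_hasCompactSupport hfs.deriv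
  calc ∫ t : ℝ, A t = ∫ t : ℝ, (B t + deriv f t) := by simp only [h]
    _ = (∫ t : ℝ, B t) + ∫ t : ℝ, deriv f t := integral_add hB hd
    _ = ∫ t : ℝ, B t := by rw [integral_deriv_zero hf hfs, add_zero]

/-- Fiberwise spectral gap. -/
lemma fiber_gap {u : ℝ → ℝ} (hu : ContDiff ℝ 1 u) (hc : HasCompactSupport u)
    (horth : ∫ t : ℝ, u t * deriv vStar t = 0) :
    ∫ t : ℝ, (u t) ^ 2 ≤
      ∫ t : ℝ, (deriv u t + Real.sqrt 2 * vStar t * u t) ^ 2 := by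
  have hucont : Continuous u := hu.continuous
  have hu'cont : Continuous (deriv u) := hu.continuous_deriv le_rfl
  have huderiv : ∀ t, HasDerivAt u (deriv u t) t :=
    fun t => (hu.differentiable one_ne_zero t).hasDerivAt
  -- bound the support
  obtain ⟨r, hr⟩ := hc.isBounded.subset_closedBall 0
  set R : ℝ := max r 0 + 1 with hRdef
  have hmax0 : (0:ℝ) ≤ max r 0 := le_max_right _ _
  have hmaxr : r ≤ max r 0 := le_max_left _ _
  have hsubIcc : tsupport u ⊆ Set.Icc (-R) R := by
    intro x hx
    have hx2 := hr hx
    rw [Real.closedBall_eq_Icc] at hx2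
    obtain ⟨h1, h2⟩ := hx2
    constructor <;> [nlinarith; nlinarith]
  set K : Set ℝ := Set.Icc (-R - 1) (R + 1) with hKdef
  have hKcompact : IsCompact K := isCompact_Icc
  have hIccK : Set.Icc (-R) R ⊆ K := Set.Icc_subset_Icc (by linarith) (by linarith)
  have hKt : tsupport u ⊆ K := hsubIcc.trans hIccK
  have huK : ∀ x, x ∉ K → u x = 0 :=
    fun x hx => image_eq_zero_of_notMem_tsupport (fun h => hx (hKt h))
  have hu'K : ∀ x, x ∉ K → deriv u x = 0 := by
    intro x hx
    by_contra hne
    exact hx (hKt (support_deriv_subset (hne : x ∈ Function.support (deriv u))))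
  -- general integrability helper
  have hint : ∀ {h : ℝ → ℝ}, Continuous h → (∀ x, x ∉ K → h x = 0) → Integrable h :=
    fun hcont hzero => hcont.integrable_of_hasCompactSupport
      (HasCompactSupport.intro hKcompact hzero)
  -- the weight function g
  set g : ℝ → ℝ := fun x => u x * (1 - vStar x ^ 2) with hgdef
  have hgcont : Continuous g := hucont.mul (continuous_const.sub (vStar_continuous.pow 2))
  have hgK : ∀ x, x ∉ K → g x = 0 := fun x hx => by rw [hgdef]; simp [huK x hx]
  have hgint : Integrable g := hint hgcont hgK
  have hgtotal : (∫ x : ℝ, g x) = 0 := by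
    have heq : ∀ x, g x = Real.sqrt 2 * (u x * deriv vStar x) := by
      intro x
      rw [deriv_vStar, hgdef]
      have h2 : Real.sqrt 2 ≠ 0 := by positivity
      field_simp
    calc (∫ x : ℝ, g x) = ∫ x : ℝ, Real.sqrt 2 * (u x * deriv vStar x) := by
          simp only [heq]
      _ = Real.sqrt 2 * ∫ x : ℝ, u x * deriv vStar x := (integral_const_mul _ _)
      _ = 0 := by rw [horth, mul_zero]
  -- the antiderivative F
  set F : ℝ → ℝ := fun t => ∫ x in (-R - 1)..t, g x with hFdef
  have hF : ∀ t, HasDerivAt F (g t) t := by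
    intro t
    exact intervalIntegral.integral_hasDerivAt_right hgint.intervalIntegrable
      (hgcont.stronglyMeasurableAtFilter _ _) hgcont.continuousAt
  have hFderiv : deriv F = g := funext fun t => (hF t).deriv
  have hFcont : ContDiff ℝ 1 F := contDiff_one_iff_deriv.mpr
    ⟨fun t => (hF t).differentiableAt, by rw [hFderiv]; exact hgcont⟩
  have hgIcc : ∀ x, x ∉ Set.Icc (-R) R → g x = 0 := by
    intro x hx
    rw [hgdef]
    simp [image_eq_zero_of_notMem_tsupport (fun h => hx (hsubIcc h))]
  have hFzero : ∀ t, t ∉ K → F t = 0 := by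
    intro t ht
    rw [hKdef] at ht
    simp only [Set.mem_Icc, not_and_or, not_le] at ht
    rcases ht with ht | ht
    · have hz : Set.EqOn g 0 (Set.uIcc (-R - 1) t) := by
        intro x hx
        rw [Set.uIcc_comm, Set.uIcc_of_le (le_of_lt ht)] at hx
        refine hgIcc x ?_
        simp only [Set.mem_Icc, not_and_or, not_le]
        left
        have := hx.2
        linarith
      rw [hFdef]
      simp only
      rw [intervalIntegral.integral_congr hz]
      simp
    · have hsupg : Function.support g ⊆ Set.Ioc (-R - 1) t := by
        intro x hx
        have hxI : x ∈ Set.Icc (-R) R := by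
          by_contra hxn
          exact hx (hgIcc x hxn)
        obtain ⟨h1, h2⟩ := hxI
        exact ⟨by linarith, by linarith⟩
      rw [hFdef]
      simp only
      rw [intervalIntegral.integral_eq_integral_of_support_subset hsupg, hgtotal]
  -- the solution w of B* w = u
  set w : ℝ → ℝ := fun t => -(F t) / (1 - vStar t ^ 2) with hwdef
  have hμ : ∀ t, (1 - vStar t ^ 2) ≠ 0 := fun t => (one_sub_vStar_sq_pos t).ne'
  have hwC1 : ContDiff ℝ 1 w :=
    (hFcont.neg).div (contDiff_const.sub (vStar_contDiff.pow 2)) hμ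
  have hwK : ∀ x, x ∉ K → w x = 0 := by
    intro x hx; rw [hwdef]; simp [hFzero x hx]
  have hwcont : Continuous w := hwC1.continuous
  have hw'cont : Continuous (deriv w) := hwC1.continuous_deriv le_rfl
  have hw'K : ∀ x, x ∉ K → deriv w x = 0 := by
    intro x hx
    by_contra hne
    have hmem : x ∈ tsupport w :=
      support_deriv_subset (hne : x ∈ Function.support (deriv w))
    exact hx (closure_minimal (Function.support_subset_iff'.mpr hwK) isClosed_Icc hmem)
  have hs2 : Real.sqrt 2 ≠ 0 := by positivity
  have hwd : ∀ t, HasDerivAt w (-(u t) + Real.sqrt 2 * vStar t * w t) t := by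
    intro t
    have hμd : HasDerivAt (fun s => 1 - vStar s ^ 2)
        (-(Real.sqrt 2 * vStar t * (1 - vStar t ^ 2))) t := by
      have h2 := (vStar_hasDerivAt t).pow 2
      have h3 := (hasDerivAt_const t (1:ℝ)).sub h2
      refine h3.congr_deriv ?_
      field_simp
      linear_combination (vStar t * (1 - vStar t ^ 2)) * sqrt2_sq
    have h := ((hF t).neg).div hμd (hμ t)
    have hconv : (-(g t) * (1 - vStar t ^ 2) -
        -(F t) * -(Real.sqrt 2 * vStar t * (1 - vStar t ^ 2))) / (1 - vStar t ^ 2) ^ 2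
        = -(u t) + Real.sqrt 2 * vStar t * w t := by
      rw [hwdef, hgdef]
      simp only
      field_simp [hμ t]
      ring
    rw [hwdef]
    simp only
    rw [← hconv]
    exact h
  have hwderiv : ∀ t, deriv w t = -(u t) + Real.sqrt 2 * vStar t * w t :=
    fun t => (hwd t).deriv
  -- integrability of all relevant functions
  have int_u2 : Integrable (fun t => u t ^ 2) :=
    hint (hucont.pow 2) (fun x hx => by simp [huK x hx])
  have int_w2 : Integrable (fun t => w t ^ 2) :=
    hint (hwcont.pow 2) (fun x hx => by simp [hwK x hx])
  have hBucont : Continuous (fun t => deriv u t + Real.sqrt 2 * vStar t * u t) :=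
    hu'cont.add ((continuous_const.mul vStar_continuous).mul hucont)
  have int_Bu2 : Integrable (fun t => (deriv u t + Real.sqrt 2 * vStar t * u t) ^ 2) :=
    hint (hBucont.pow 2) (fun x hx => by simp [huK x hx, hu'K x hx])
  have int_B1 : Integrable (fun t => (deriv w t) ^ 2 + (1 + vStar t ^ 2) * (w t) ^ 2) :=
    hint ((hw'cont.pow 2).add ((continuous_const.add (vStar_continuous.pow 2)).mul
      (hwcont.pow 2))) (fun x hx => by simp [hwK x hx, hw'K x hx])
  have int_wBu : Integrable (fun t => w t * (deriv u t + Real.sqrt 2 * vStar t * u t)) :=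
    hint (hwcont.mul hBucont) (fun x hx => by simp [hwK x hx])
  -- ∫ u² = ∫ (w'² + (1+v²) w²)
  have hNrepr : (∫ t : ℝ, (u t) ^ 2)
      = ∫ t : ℝ, ((deriv w t) ^ 2 + (1 + vStar t ^ 2) * (w t) ^ 2) := by
    apply integral_shift (fun t => -(Real.sqrt 2 * vStar t * w t ^ 2))
      (((contDiff_const.mul vStar_contDiff).mul (hwC1.pow 2)).neg)
      (HasCompactSupport.intro hKcompact (fun x hx => by simp [hwK x hx]))
      int_B1
    intro t
    have hsv : HasDerivAt (fun t => Real.sqrt 2 * vStar t) (1 - vStar t ^ 2) t := by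
      have h1 := (vStar_hasDerivAt t).const_mul (Real.sqrt 2)
      refine h1.congr_deriv ?_
      field_simp
    have hfd : HasDerivAt (fun t => -(Real.sqrt 2 * vStar t * w t ^ 2))
        (-((1 - vStar t ^ 2) * w t ^ 2
          + (Real.sqrt 2 * vStar t) * (2 * w t ^ 1 * (-(u t) + Real.sqrt 2 * vStar t * w t)))) t := by
      exact (hsv.mul ((hwd t).pow 2)).neg
    rw [hfd.deriv, hwderiv t]
    linear_combination (vStar t ^ 2 * w t ^ 2) * sqrt2_sq
  -- ∫ w² ≤ ∫ u²
  have hW_le_N : (∫ t : ℝ, (w t) ^ 2) ≤ ∫ t : ℝ, (u t) ^ 2 := by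
    rw [hNrepr]
    refine integral_mono int_w2 int_B1 (fun t => ?_)
    have h1 := sq_nonneg (deriv w t)
    have h2 := sq_nonneg (vStar t * w t)
    nlinarith [sq_nonneg (w t)]
  -- ∫ u² = ∫ w · Bu
  have hNQ : (∫ t : ℝ, (u t) ^ 2)
      = ∫ t : ℝ, w t * (deriv u t + Real.sqrt 2 * vStar t * u t) := by
    apply integral_shift (fun t => -(w t * u t))
      ((hwC1.mul hu).neg)
      (HasCompactSupport.intro hKcompact (fun x hx => by simp [hwK x hx]))
      int_wBu
    intro t
    have hfd : HasDerivAt (fun t => -(w t * u t))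
        (-((-(u t) + Real.sqrt 2 * vStar t * w t) * u t + w t * deriv u t)) t :=
      ((hwd t).mul (huderiv t)).neg
    rw [hfd.deriv]
    ring
  -- AM-GM step
  have hAM : (∫ t : ℝ, 2 * (w t * (deriv u t + Real.sqrt 2 * vStar t * u t)))
      ≤ ∫ t : ℝ, ((w t) ^ 2 + (deriv u t + Real.sqrt 2 * vStar t * u t) ^ 2) := by
    refine integral_mono (int_wBu.const_mul 2) (int_w2.add int_Bu2) (fun t => ?_)
    nlinarith [sq_nonneg (w t - (deriv u t + Real.sqrt 2 * vStar t * u t))]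
  rw [integral_const_mul, ← hNQ, integral_add int_w2 int_Bu2] at hAM
  linarith

/-- The basic Bogomolny-type identity for the 1D quadratic form. -/
lemma q_repr {u : ℝ → ℝ} (hu : ContDiff ℝ 1 u) (hc : HasCompactSupport u) :
    (∫ t : ℝ, (deriv u t + Real.sqrt 2 * vStar t * u t) ^ 2)
      = ∫ t : ℝ, ((deriv u t) ^ 2 - (1 - 3 * vStar t ^ 2) * (u t) ^ 2) := by
  have hucont : Continuous u := hu.continuous
  have hu'cont : Continuous (deriv u) := hu.continuous_deriv le_rfl
  have huderiv : ∀ t, HasDerivAt u (deriv u t) t :=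
    fun t => (hu.differentiable one_ne_zero t).hasDerivAt
  have huK : ∀ x, x ∉ tsupport u → u x = 0 :=
    fun x hx => image_eq_zero_of_notMem_tsupport hx
  have hu'K : ∀ x, x ∉ tsupport u → deriv u x = 0 := by
    intro x hx
    by_contra hne
    exact hx (support_deriv_subset (hne : x ∈ Function.support (deriv u)))
  have hint : ∀ {h : ℝ → ℝ}, Continuous h → (∀ x, x ∉ tsupport u → h x = 0) →
      Integrable h :=
    fun hcont hzero => hcont.integrable_of_hasCompactSupport
      (HasCompactSupport.intro hc hzero)
  have int_B : Integrable (fun t => (deriv u t) ^ 2 - (1 - 3 * vStar t ^ 2) * (u t) ^ 2) :=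
    hint ((hu'cont.pow 2).sub ((continuous_const.sub
      (continuous_const.mul (vStar_continuous.pow 2))).mul (hucont.pow 2)))
      (fun x hx => by simp [huK x hx, hu'K x hx])
  apply integral_shift (fun t => Real.sqrt 2 * vStar t * u t ^ 2)
    ((contDiff_const.mul vStar_contDiff).mul (hu.pow 2))
    (HasCompactSupport.intro hc (fun x hx => by simp [huK x hx]))
    int_B
  intro t
  have hsv : HasDerivAt (fun t => Real.sqrt 2 * vStar t) (1 - vStar t ^ 2) t := by
    have h1 := (vStar_hasDerivAt t).const_mul (Real.sqrt 2)
    refine h1.congr_deriv ?_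
    have hs2 : Real.sqrt 2 ≠ 0 := by positivity
    field_simp
  have hfd : HasDerivAt (fun t => Real.sqrt 2 * vStar t * u t ^ 2)
      ((1 - vStar t ^ 2) * u t ^ 2
        + (Real.sqrt 2 * vStar t) * (2 * u t ^ 1 * deriv u t)) t :=
    hsv.mul ((huderiv t).pow 2)
  rw [hfd.deriv]
  linear_combination (vStar t ^ 2 * u t ^ 2) * sqrt2_sq

/-- The full fiberwise coercivity estimate. -/
lemma fiber_full {u : ℝ → ℝ} (hu : ContDiff ℝ 1 u) (hc : HasCompactSupport u)
    (horth : ∫ t : ℝ, u t * deriv vStar t = 0) :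
    (1/3 : ℝ) * (∫ t : ℝ, ((deriv u t) ^ 2 + (u t) ^ 2))
      ≤ ∫ t : ℝ, ((deriv u t) ^ 2 - (1 - 3 * vStar t ^ 2) * (u t) ^ 2) := by
  have hucont : Continuous u := hu.continuous
  have hu'cont : Continuous (deriv u) := hu.continuous_deriv le_rfl
  have huK : ∀ x, x ∉ tsupport u → u x = 0 :=
    fun x hx => image_eq_zero_of_notMem_tsupport hx
  have hu'K : ∀ x, x ∉ tsupport u → deriv u x = 0 := by
    intro x hx
    by_contra hne
    exact hx (support_deriv_subset (hne : x ∈ Function.support (deriv u)))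
  have hint : ∀ {h : ℝ → ℝ}, Continuous h → (∀ x, x ∉ tsupport u → h x = 0) →
      Integrable h :=
    fun hcont hzero => hcont.integrable_of_hasCompactSupport
      (HasCompactSupport.intro hc hzero)
  have int_u2 : Integrable (fun t => u t ^ 2) :=
    hint (hucont.pow 2) (fun x hx => by simp [huK x hx])
  have int_d2 : Integrable (fun t => (deriv u t) ^ 2) :=
    hint (hu'cont.pow 2) (fun x hx => by simp [hu'K x hx])
  have int_vu2 : Integrable (fun t => (1 - 3 * vStar t ^ 2) * (u t) ^ 2) :=
    hint ((continuous_const.sub (continuous_const.mul (vStar_continuous.pow 2))).mul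
      (hucont.pow 2)) (fun x hx => by simp [huK x hx])
  have hsplit1 : (∫ t : ℝ, ((deriv u t) ^ 2 + (u t) ^ 2))
      = (∫ t : ℝ, (deriv u t) ^ 2) + ∫ t : ℝ, (u t) ^ 2 := integral_add int_d2 int_u2
  have hsplit2 : (∫ t : ℝ, ((deriv u t) ^ 2 - (1 - 3 * vStar t ^ 2) * (u t) ^ 2))
      = (∫ t : ℝ, (deriv u t) ^ 2) - ∫ t : ℝ, (1 - 3 * vStar t ^ 2) * (u t) ^ 2 :=
    integral_sub int_d2 int_vu2
  have hle : (∫ t : ℝ, (1 - 3 * vStar t ^ 2) * (u t) ^ 2) ≤ ∫ t : ℝ, (u t) ^ 2 :=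
    integral_mono int_vu2 int_u2
      (fun t => by nlinarith [sq_nonneg (u t), sq_nonneg (vStar t * u t)])
  have hgap : (∫ t : ℝ, (u t) ^ 2)
      ≤ (∫ t : ℝ, (deriv u t) ^ 2) - ∫ t : ℝ, (1 - 3 * vStar t ^ 2) * (u t) ^ 2 := by
    rw [← hsplit2, ← q_repr hu hc]
    exact fiber_gap hu hc horth
  rw [hsplit1, hsplit2]
  linarith

theorem stmt3 :
    ∃ C : ℝ, 0 < C ∧
      ∀ L : ℝ, 0 < L →
        ∀ φ : ℝ × ℝ → ℝ, ContDiff ℝ 1 φ → HasCompactSupport φ →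
          (∀ s : ℝ, (∫ t : ℝ, φ (s, t) * deriv vStar t) = 0) →
          C * (∫ s in Set.Ioo (0 : ℝ) L, ∫ t : ℝ,
              ((pds φ s t) ^ 2 + (pdt φ s t) ^ 2 + (φ (s, t)) ^ 2)) ≤
            ∫ s in Set.Ioo (0 : ℝ) L, ∫ t : ℝ,
              ((pds φ s t) ^ 2 + (pdt φ s t) ^ 2 - (1 - 3 * (vStar t) ^ 2) * (φ (s, t)) ^ 2) := by
  refine ⟨1/3, by norm_num, ?_⟩
  intro L hL φ hφ hφs horth
  have hdiff : Differentiable ℝ φ := hφ.differentiable one_ne_zero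
  -- identify the partial derivatives with applied Fréchet derivatives
  have hpds : ∀ s t : ℝ, pds φ s t = fderiv ℝ φ (s, t) (1, 0) := by
    intro s t
    have h1 : HasDerivAt (fun x : ℝ => (x, t)) ((1 : ℝ), (0 : ℝ)) s :=
      (hasDerivAt_id s).prodMk (hasDerivAt_const s t)
    have h2 := (hdiff (s, t)).hasFDerivAt.comp_hasDerivAt s h1
    exact h2.deriv
  have hpdt : ∀ s t : ℝ, pdt φ s t = fderiv ℝ φ (s, t) (0, 1) := by
    intro s t
    have h1 : HasDerivAt (fun y : ℝ => (s, y)) ((0 : ℝ), (1 : ℝ)) t :=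
      (hasDerivAt_const t s).prodMk (hasDerivAt_id t)
    have h2 := (hdiff (s, t)).hasFDerivAt.comp_hasDerivAt t h1
    exact h2.deriv
  -- compact support data in the plane
  set K2 : Set (ℝ × ℝ) := tsupport φ ∪ tsupport (fderiv ℝ φ) with hK2def
  have hK2c : IsCompact K2 := hφs.union (hφs.fderiv ℝ)
  have hφ0 : ∀ p, p ∉ K2 → φ p = 0 :=
    fun p hp => image_eq_zero_of_notMem_tsupport (fun h => hp (Or.inl h))
  have hfd0 : ∀ p, p ∉ K2 → fderiv ℝ φ p = 0 :=
    fun p hp => image_eq_zero_of_notMem_tsupport (fun h => hp (Or.inr h))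
  have hfdc : Continuous (fun p : ℝ × ℝ => fderiv ℝ φ p) := hφ.continuous_fderiv one_ne_zero
  have hPdsc : Continuous (fun p : ℝ × ℝ => fderiv ℝ φ p (1, 0)) :=
    hfdc.clm_apply continuous_const
  have hPdtc : Continuous (fun p : ℝ × ℝ => fderiv ℝ φ p (0, 1)) :=
    hfdc.clm_apply continuous_const
  -- integrable integrands on the plane
  have hHLcont : Continuous (fun p : ℝ × ℝ =>
      fderiv ℝ φ p (1, 0) ^ 2 + fderiv ℝ φ p (0, 1) ^ 2 + φ p ^ 2) :=
    ((hPdsc.pow 2).add (hPdtc.pow 2)).add (hφ.continuous.pow 2)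
  have hHRcont : Continuous (fun p : ℝ × ℝ =>
      fderiv ℝ φ p (1, 0) ^ 2 + fderiv ℝ φ p (0, 1) ^ 2
        - (1 - 3 * vStar p.2 ^ 2) * φ p ^ 2) :=
    ((hPdsc.pow 2).add (hPdtc.pow 2)).sub
      ((continuous_const.sub (continuous_const.mul
        ((vStar_continuous.comp continuous_snd).pow 2))).mul (hφ.continuous.pow 2))
  have hHLint : Integrable (fun p : ℝ × ℝ =>
      fderiv ℝ φ p (1, 0) ^ 2 + fderiv ℝ φ p (0, 1) ^ 2 + φ p ^ 2) :=
    hHLcont.integrable_of_hasCompactSupport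
      (HasCompactSupport.intro hK2c (fun p hp => by simp [hφ0 p hp, hfd0 p hp]))
  have hHRint : Integrable (fun p : ℝ × ℝ =>
      fderiv ℝ φ p (1, 0) ^ 2 + fderiv ℝ φ p (0, 1) ^ 2
        - (1 - 3 * vStar p.2 ^ 2) * φ p ^ 2) :=
    hHRcont.integrable_of_hasCompactSupport
      (HasCompactSupport.intro hK2c (fun p hp => by simp [hφ0 p hp, hfd0 p hp]))
  -- integrability of the inner integrals as functions of s
  have hILint : Integrable (fun s : ℝ => ∫ t : ℝ,
      (fderiv ℝ φ (s, t) (1, 0) ^ 2 + fderiv ℝ φ (s, t) (0, 1) ^ 2 + φ (s, t) ^ 2)) := by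
    rw [Measure.volume_eq_prod ℝ ℝ] at hHLint
    exact hHLint.integral_prod_left
  have hIRint : Integrable (fun s : ℝ => ∫ t : ℝ,
      (fderiv ℝ φ (s, t) (1, 0) ^ 2 + fderiv ℝ φ (s, t) (0, 1) ^ 2
        - (1 - 3 * vStar t ^ 2) * φ (s, t) ^ 2)) := by
    rw [Measure.volume_eq_prod ℝ ℝ] at hHRint
    exact hHRint.integral_prod_left
  -- rewrite the statement integrals in fderiv form
  have hfunL : (fun s : ℝ => ∫ t : ℝ, ((pds φ s t) ^ 2 + (pdt φ s t) ^ 2 + (φ (s, t)) ^ 2))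
      = fun s : ℝ => ∫ t : ℝ,
        (fderiv ℝ φ (s, t) (1, 0) ^ 2 + fderiv ℝ φ (s, t) (0, 1) ^ 2 + φ (s, t) ^ 2) := by
    funext s
    congr 1
    funext t
    rw [hpds, hpdt]
  have hfunR : (fun s : ℝ => ∫ t : ℝ, ((pds φ s t) ^ 2 + (pdt φ s t) ^ 2
        - (1 - 3 * (vStar t) ^ 2) * (φ (s, t)) ^ 2))
      = fun s : ℝ => ∫ t : ℝ,
        (fderiv ℝ φ (s, t) (1, 0) ^ 2 + fderiv ℝ φ (s, t) (0, 1) ^ 2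
          - (1 - 3 * vStar t ^ 2) * φ (s, t) ^ 2) := by
    funext s
    congr 1
    funext t
    rw [hpds, hpdt]
  -- the fiberwise estimate, for every s
  have hfiber : ∀ s : ℝ,
      (1/3 : ℝ) * (∫ t : ℝ,
        (fderiv ℝ φ (s, t) (1, 0) ^ 2 + fderiv ℝ φ (s, t) (0, 1) ^ 2 + φ (s, t) ^ 2))
      ≤ ∫ t : ℝ, (fderiv ℝ φ (s, t) (1, 0) ^ 2 + fderiv ℝ φ (s, t) (0, 1) ^ 2
          - (1 - 3 * vStar t ^ 2) * φ (s, t) ^ 2) := by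
    intro s
    set Ks : Set ℝ := Prod.snd '' K2 with hKsdef
    have hKsc : IsCompact Ks := hK2c.image continuous_snd
    have hmemKs : ∀ t : ℝ, t ∉ Ks → (s, t) ∉ K2 := by
      intro t ht hmem
      exact ht ⟨(s, t), hmem, rfl⟩
    -- the fiber function
    have hu : ContDiff ℝ 1 (fun t : ℝ => φ (s, t)) :=
      hφ.comp (contDiff_const.prodMk contDiff_id)
    have hcs : HasCompactSupport (fun t : ℝ => φ (s, t)) :=
      HasCompactSupport.intro hKsc (fun t ht => hφ0 _ (hmemKs t ht))
    have hdu : ∀ t : ℝ, deriv (fun y : ℝ => φ (s, y)) t = fderiv ℝ φ (s, t) (0, 1) :=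
      fun t => hpdt s t
    -- fiberwise integrability
    have hPdszero : ∀ t : ℝ, t ∉ Ks → fderiv ℝ φ (s, t) (1, 0) ^ 2 = 0 := by
      intro t ht
      rw [hfd0 _ (hmemKs t ht)]
      simp
    have int_pds2 : Integrable (fun t : ℝ => fderiv ℝ φ (s, t) (1, 0) ^ 2) :=
      (((hPdsc.comp (continuous_const.prodMk continuous_id)).pow 2)).integrable_of_hasCompactSupport
        (HasCompactSupport.intro hKsc hPdszero)
    have int_rest : Integrable (fun t : ℝ =>
        fderiv ℝ φ (s, t) (0, 1) ^ 2 + φ (s, t) ^ 2) :=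
      (((hPdtc.comp (continuous_const.prodMk continuous_id)).pow 2).add
        ((hφ.continuous.comp (continuous_const.prodMk continuous_id)).pow 2)).integrable_of_hasCompactSupport
        (HasCompactSupport.intro hKsc (fun t ht => by
          simp [Function.comp, hfd0 _ (hmemKs t ht), hφ0 _ (hmemKs t ht)]))
    have int_rhs : Integrable (fun t : ℝ =>
        fderiv ℝ φ (s, t) (0, 1) ^ 2 - (1 - 3 * vStar t ^ 2) * φ (s, t) ^ 2) :=
      (((hPdtc.comp (continuous_const.prodMk continuous_id)).pow 2).sub
        ((continuous_const.sub (continuous_const.mul (vStar_continuous.pow 2))).mul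
          ((hφ.continuous.comp (continuous_const.prodMk continuous_id)).pow 2))).integrable_of_hasCompactSupport
        (HasCompactSupport.intro hKsc (fun t ht => by
          simp [Function.comp, hfd0 _ (hmemKs t ht), hφ0 _ (hmemKs t ht)]))
    -- split the integrals
    have hsplitL : (∫ t : ℝ,
        (fderiv ℝ φ (s, t) (1, 0) ^ 2 + fderiv ℝ φ (s, t) (0, 1) ^ 2 + φ (s, t) ^ 2))
        = (∫ t : ℝ, fderiv ℝ φ (s, t) (1, 0) ^ 2)
          + ∫ t : ℝ, (fderiv ℝ φ (s, t) (0, 1) ^ 2 + φ (s, t) ^ 2) := by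
      rw [show (fun t : ℝ =>
          fderiv ℝ φ (s, t) (1, 0) ^ 2 + fderiv ℝ φ (s, t) (0, 1) ^ 2 + φ (s, t) ^ 2)
          = fun t : ℝ => fderiv ℝ φ (s, t) (1, 0) ^ 2
            + (fderiv ℝ φ (s, t) (0, 1) ^ 2 + φ (s, t) ^ 2) from funext fun t => by ring]
      exact integral_add int_pds2 int_rest
    have hsplitR : (∫ t : ℝ,
        (fderiv ℝ φ (s, t) (1, 0) ^ 2 + fderiv ℝ φ (s, t) (0, 1) ^ 2
          - (1 - 3 * vStar t ^ 2) * φ (s, t) ^ 2))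
        = (∫ t : ℝ, fderiv ℝ φ (s, t) (1, 0) ^ 2)
          + ∫ t : ℝ, (fderiv ℝ φ (s, t) (0, 1) ^ 2
            - (1 - 3 * vStar t ^ 2) * φ (s, t) ^ 2) := by
      rw [show (fun t : ℝ =>
          fderiv ℝ φ (s, t) (1, 0) ^ 2 + fderiv ℝ φ (s, t) (0, 1) ^ 2
            - (1 - 3 * vStar t ^ 2) * φ (s, t) ^ 2)
          = fun t : ℝ => fderiv ℝ φ (s, t) (1, 0) ^ 2
            + (fderiv ℝ φ (s, t) (0, 1) ^ 2 - (1 - 3 * vStar t ^ 2) * φ (s, t) ^ 2)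
          from funext fun t => by ring]
      exact integral_add int_pds2 int_rhs
    -- apply the fiber lemma
    have key := fiber_full hu hcs (horth s)
    have hkey' : (1/3 : ℝ) * (∫ t : ℝ, (fderiv ℝ φ (s, t) (0, 1) ^ 2 + φ (s, t) ^ 2))
        ≤ ∫ t : ℝ, (fderiv ℝ φ (s, t) (0, 1) ^ 2
          - (1 - 3 * vStar t ^ 2) * φ (s, t) ^ 2) := by
      have e1 : (fun t : ℝ => (deriv (fun t : ℝ => φ (s, t)) t) ^ 2 + (φ (s, t)) ^ 2)
          = fun t : ℝ => fderiv ℝ φ (s, t) (0, 1) ^ 2 + φ (s, t) ^ 2 :=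
        funext fun t => by rw [hdu t]
      have e2 : (fun t : ℝ => (deriv (fun t : ℝ => φ (s, t)) t) ^ 2
            - (1 - 3 * vStar t ^ 2) * (φ (s, t)) ^ 2)
          = fun t : ℝ => fderiv ℝ φ (s, t) (0, 1) ^ 2
            - (1 - 3 * vStar t ^ 2) * φ (s, t) ^ 2 :=
        funext fun t => by rw [hdu t]
      rw [← e1, ← e2]
      exact key
    have hnn : (0 : ℝ) ≤ ∫ t : ℝ, fderiv ℝ φ (s, t) (1, 0) ^ 2 :=
      integral_nonneg (fun t => sq_nonneg _)
    rw [hsplitL, hsplitR]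
    linarith
  -- conclude by integrating over s
  rw [hfunL, hfunR, ← integral_const_mul]
  exact setIntegral_mono_on ((hILint.const_mul (1/3)).integrableOn)
    hIRint.integrableOn measurableSet_Ioo (fun s _ => hfiber s)
end
end

section
/- Let S > 0 and let q : ℝ → ℝ be continuous. Suppose Φ⁺, Φ⁻ : ℝ → ℝ are twice continuously differentiable, linearly independent solutions of Φ'' + q Φ = 0 on ℝ such that (Φ⁺)'(0) = (Φ⁺)'(S) ≠ 0 and (Φ⁻)'(0) ≠ (Φ⁻)'(S). Then every twice continuously differentiable function h : ℝ → ℝ satisfying h'' + q h = 0 on ℝ, h(s + S) = h(s) for all s ∈ ℝ, and h(S − s) = h(s) for all s ∈ ℝ, is identically zero. -/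
noncomputable section

open Set NNReal

private lemma deriv_diff_of_contDiff2 {f : ℝ → ℝ} (hf : ContDiff ℝ 2 f) :
    Differentiable ℝ (deriv f) := by
  have : ContDiff ℝ ((1 : ℕ) + 1) f := by exact_mod_cast hf
  rw [contDiff_succ_iff_deriv] at this
  exact this.2.2.differentiable (by norm_num)

theorem stmt4 (S : ℝ) (hS : 0 < S) (q Φp Φm : ℝ → ℝ) (hq : Continuous q)
    (hΦp : ContDiff ℝ 2 Φp) (hΦm : ContDiff ℝ 2 Φm)
    (hΦpODE : ∀ s : ℝ, deriv (deriv Φp) s + q s * Φp s = 0)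
    (hΦmODE : ∀ s : ℝ, deriv (deriv Φm) s + q s * Φm s = 0)
    (hli : LinearIndependent ℝ ![Φp, Φm])
    (hp1 : deriv Φp 0 = deriv Φp S) (hp2 : deriv Φp 0 ≠ 0)
    (hm : deriv Φm 0 ≠ deriv Φm S)
    (h : ℝ → ℝ) (hh : ContDiff ℝ 2 h)
    (hODE : ∀ s : ℝ, deriv (deriv h) s + q s * h s = 0)
    (hper : ∀ s : ℝ, h (s + S) = h s) (heven : ∀ s : ℝ, h (S - s) = h s) :
    ∀ s : ℝ, h s = 0 := by
  have hd1 : Differentiable ℝ h := hh.differentiable (by norm_num)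
  have hd2 : Differentiable ℝ (deriv h) := deriv_diff_of_contDiff2 hh
  have hΦmd1 : Differentiable ℝ Φm := hΦm.differentiable (by norm_num)
  have hΦmd2 : Differentiable ℝ (deriv Φm) := deriv_diff_of_contDiff2 hΦm
  -- deriv h S = deriv h 0
  have hps : deriv h S = deriv h 0 := by
    have h1 : HasDerivAt (fun s => h (s + S)) (deriv h (0 + S) * 1) 0 :=
      (hd1 (0 + S)).hasDerivAt.comp 0 ((hasDerivAt_id 0).add_const S)
    have h2 : (fun s : ℝ => h (s + S)) = h := funext hper
    rw [h2] at h1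
    have := h1.unique (hd1 0).hasDerivAt
    simpa using this
  -- deriv h S = - deriv h 0
  have hpa : deriv h S = - deriv h 0 := by
    have h1 : HasDerivAt (fun s => h (S - s)) (deriv h (S - 0) * (0 - 1)) 0 :=
      (hd1 (S - 0)).hasDerivAt.comp 0 ((hasDerivAt_const 0 S).sub (hasDerivAt_id 0))
    have h2 : (fun s : ℝ => h (S - s)) = h := funext heven
    rw [h2] at h1
    have := h1.unique (hd1 0).hasDerivAt
    simp only [sub_zero] at this
    linarith
  have hd0 : deriv h 0 = 0 := by linarith
  have hdS : deriv h S = 0 := by linarith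
  -- Wronskian with Φm is constant
  set W : ℝ → ℝ := fun s => h s * deriv Φm s - deriv h s * Φm s with hWdef
  have hW : ∀ s, HasDerivAt W 0 s := by
    intro s
    have e1 : HasDerivAt W (deriv h s * deriv Φm s + h s * deriv (deriv Φm) s -
        (deriv (deriv h) s * Φm s + deriv h s * deriv Φm s)) s :=
      ((hd1 s).hasDerivAt.mul (hΦmd2 s).hasDerivAt).sub
        ((hd2 s).hasDerivAt.mul (hΦmd1 s).hasDerivAt)
    convert e1 using 1
    have a1 := hΦmODE s
    have a2 := hODE s
    linear_combination (-(h s)) * a1 + Φm s * a2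
  have hWc : W S = W 0 :=
    is_const_of_deriv_eq_zero (fun s => (hW s).differentiableAt) (fun s => (hW s).deriv) S 0
  have hhS0 : h S = h 0 := by have := hper 0; simpa using this
  have hh0 : h 0 = 0 := by
    have : h 0 * (deriv Φm 0 - deriv Φm S) = 0 := by
      simp only [hWdef] at hWc
      rw [hdS, hd0, hhS0] at hWc
      ring_nf
      ring_nf at hWc
      linarith
    rcases mul_eq_zero.mp this with h0 | h0
    · exact h0
    · exact absurd (sub_eq_zero.mp h0) hm
  -- uniqueness of ODE solutions
  intro s
  set a : ℝ := -(|s| + 1) with ha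
  set b : ℝ := |s| + S + 1 with hb
  have habs := abs_nonneg s
  have hab : a < b := by dsimp [a, b]; linarith
  have h0ab : (0 : ℝ) ∈ Ioo a b := by constructor <;> dsimp [a, b] <;> linarith
  have hsab : s ∈ Icc a b := by
    constructor <;> dsimp [a, b] <;> [linarith [neg_abs_le s]; linarith [le_abs_self s]]
  -- bound q on the interval
  obtain ⟨C, hC⟩ := (isCompact_Icc : IsCompact (Icc a b)).exists_bound_of_continuousOn
    (hq.continuousOn (s := Icc a b))
  have hC0 : (0 : ℝ) ≤ C := le_trans (norm_nonneg _) (hC a ⟨le_refl a, le_of_lt hab⟩)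
  -- clamped coefficient
  set qc : ℝ → ℝ := fun t => q (max a (min t b)) with hqc
  have hqcb : ∀ t, |qc t| ≤ C := by
    intro t
    have hmem : max a (min t b) ∈ Icc a b :=
      ⟨le_max_left _ _, max_le (le_of_lt hab) (min_le_right _ _)⟩
    exact hC _ hmem
  have hqceq : ∀ t ∈ Ioo a b, qc t = q t := by
    intro t ht
    have : max a (min t b) = t := by
      rw [min_eq_left (le_of_lt ht.2), max_eq_right (le_of_lt ht.1)]
    rw [hqc]; simp only [this]
  set K : ℝ≥0 := Real.toNNReal (max 1 C) with hK
  have hKc : (K : ℝ) = max 1 C := Real.coe_toNNReal _ (le_trans zero_le_one (le_max_left _ _))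
  set v : ℝ → ℝ × ℝ → ℝ × ℝ := fun t x => (x.2, -qc t * x.1) with hv
  have hlip : ∀ t, LipschitzWith K (v t) := by
    intro t
    apply LipschitzWith.of_dist_le_mul
    intro x y
    rw [Prod.dist_eq, Prod.dist_eq, hKc]
    simp only [hv]
    have e2 : |-qc t * x.1 - -qc t * y.1| = |qc t| * |x.1 - y.1| := by
      rw [show -qc t * x.1 - -qc t * y.1 = -qc t * (x.1 - y.1) by ring, abs_mul, abs_neg]
    simp only [Real.dist_eq]
    rw [e2]
    apply max_le
    · calc |x.2 - y.2| ≤ max |x.1 - y.1| |x.2 - y.2| := le_max_right _ _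
        _ ≤ max 1 C * max |x.1 - y.1| |x.2 - y.2| := by
            nlinarith [le_max_left (1:ℝ) C, abs_nonneg (x.1 - y.1), abs_nonneg (x.2 - y.2),
              le_max_left |x.1 - y.1| |x.2 - y.2|, le_max_right |x.1 - y.1| |x.2 - y.2|]
    · calc |qc t| * |x.1 - y.1| ≤ C * |x.1 - y.1| :=
            mul_le_mul_of_nonneg_right (hqcb t) (abs_nonneg _)
        _ ≤ max 1 C * max |x.1 - y.1| |x.2 - y.2| := by
            apply mul_le_mul (le_max_right _ _) (le_max_left _ _) (abs_nonneg _)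
            exact le_trans hC0 (le_max_right _ _)
  set f : ℝ → ℝ × ℝ := fun t => (h t, deriv h t) with hf
  set g : ℝ → ℝ × ℝ := fun _ => ((0 : ℝ), (0 : ℝ)) with hg
  have hfc : ContinuousOn f (Icc a b) :=
    (hd1.continuous.prodMk hd2.continuous).continuousOn
  have hgc : ContinuousOn g (Icc a b) := continuousOn_const
  have hf' : ∀ t ∈ Ioo a b, HasDerivAt f (v t (f t)) t := by
    intro t ht
    have e1 : HasDerivAt f (deriv h t, deriv (deriv h) t) t :=
      (hd1 t).hasDerivAt.prodMk (hd2 t).hasDerivAt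
    have e2 : v t (f t) = (deriv h t, deriv (deriv h) t) := by
      simp only [hv, hf, hqceq t ht]
      have := hODE t
      have : deriv (deriv h) t = -q t * h t := by linarith
      rw [this]
    rw [e2]; exact e1
  have hg' : ∀ t ∈ Ioo a b, HasDerivAt g (v t (g t)) t := by
    intro t ht
    have e2 : v t (g t) = ((0 : ℝ), (0 : ℝ)) := by simp [hv, hg]
    rw [e2]; exact hasDerivAt_const t _
  have h00 : f 0 = g 0 := by
    simp only [hf, hg, hh0, hd0]
  have := ODE_solution_unique_of_mem_Icc (s := fun _ => (univ : Set (ℝ × ℝ)))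
    (fun t _ => (hlip t).lipschitzOnWith) h0ab hfc hf' (fun _ _ => trivial) hgc hg'
    (fun _ _ => trivial) h00 hsab
  have : f s = g s := this
  simpa [hf, hg] using congrArg Prod.fst this
end
end

section
/- Let γ ∈ (0, √2) and let a : ℝ → ℝ be continuous with 0 < a₀ ≤ a(s) ≤ A for all s, for some constants a₀, A. Then there exists a constant C > 0, depending only on γ, with the following property: if φ : ℝ² → ℝ is a bounded C² function, g : ℝ² → ℝ is continuous with G := sup_{(s,t)} |g(s,t)| cosh^γ(t) < ∞, and a(s) ∂_s²φ + ∂_t²φ + (1 − 3 v_⋆(t)²) φ = g holds on ℝ², then |φ(s,t)| ≤ C ( sup_{ℝ²} |φ| + G ) cosh^{−γ}(t) for all (s,t) ∈ ℝ². -/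
noncomputable section

open Real

/-- Second partial derivative in the first (`s`) variable. -/
def pdss (φ : ℝ × ℝ → ℝ) (s t : ℝ) : ℝ := deriv (fun x => deriv (fun y => φ (y, t)) x) s

/-- Second partial derivative in the second (`t`) variable. -/
def pdtt (φ : ℝ × ℝ → ℝ) (s t : ℝ) : ℝ := deriv (fun x => deriv (fun y => φ (s, y)) x) t

open Filter

lemma deriv2_nonneg_of_isLocalMin {f f' : ℝ → ℝ} {x₀ f'' : ℝ}
    (hf' : ∀ x, HasDerivAt f (f' x) x) (hf'' : HasDerivAt f' f'' x₀)
    (hmin : IsLocalMin f x₀) : 0 ≤ f'' := by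
  by_contra hneg
  push_neg at hneg
  have hd0 : f' x₀ = 0 := by
    have := hmin.deriv_eq_zero
    rwa [(hf' x₀).deriv] at this
  have hslope := hasDerivAt_iff_tendsto_slope.mp hf''
  have hslope' : Tendsto (slope f' x₀) (nhdsWithin x₀ (Set.Ioi x₀)) (nhds f'') :=
    hslope.mono_left (nhdsWithin_mono _ (fun y hy => Set.mem_compl_singleton_iff.mpr (ne_of_gt hy)))
  have hev : ∀ᶠ y in nhdsWithin x₀ (Set.Ioi x₀), slope f' x₀ y < 0 :=
    hslope'.eventually_lt tendsto_const_nhds hneg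
  have hev2 : ∀ᶠ y in nhdsWithin x₀ (Set.Ioi x₀), f x₀ ≤ f y :=
    hmin.filter_mono nhdsWithin_le_nhds
  obtain ⟨b, hblt, hsub⟩ := mem_nhdsGT_iff_exists_Ioc_subset.mp (hev.and hev2)
  obtain ⟨c, hc, hceq⟩ := exists_hasDerivAt_eq_slope f f' hblt
    (fun x _ => (hf' x).continuousAt.continuousWithinAt)
    (fun x _ => hf' x)
  have hcneg : f' c < 0 := by
    have hs : slope f' x₀ c < 0 := (hsub ⟨hc.1, hc.2.le⟩).1
    rw [slope_def_field, hd0, sub_zero] at hs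
    have hcpos : 0 < c - x₀ := sub_pos.mpr hc.1
    calc f' c = f' c / (c - x₀) * (c - x₀) := by field_simp
    _ < 0 := mul_neg_of_neg_of_pos hs hcpos
  have hfb : f x₀ ≤ f b := (hsub ⟨hblt, le_refl _⟩).2
  rw [hceq] at hcneg
  exact absurd hcneg (not_lt.mpr (div_nonneg (sub_nonneg.mpr hfb) (sub_nonneg.mpr hblt.le)))

lemma hasDerivAt_coshRpow (c t : ℝ) :
    HasDerivAt (fun x => Real.cosh x ^ c) (c * Real.cosh t ^ (c - 1) * Real.sinh t) t := by
  have h := (Real.hasDerivAt_cosh t).rpow_const (p := c) (Or.inl (Real.cosh_pos t).ne')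
  exact h.congr_deriv (by ring)

-- w (t) = cosh t ^ (-γ);  w' = (-γ) * cosh ^ (-γ-1) * sinh
lemma hasDerivAt_w (γ t : ℝ) :
    HasDerivAt (fun x => Real.cosh x ^ (-γ)) ((-γ) * Real.cosh t ^ (-γ - 1) * Real.sinh t) t :=
  hasDerivAt_coshRpow (-γ) t

lemma hasDerivAt_w' (γ t : ℝ) :
    HasDerivAt (fun x => (-γ) * Real.cosh x ^ (-γ - 1) * Real.sinh x)
      ((-γ) * ((-γ - 1) * Real.cosh t ^ (-γ - 1 - 1) * Real.sinh t) * Real.sinh t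
        + (-γ) * Real.cosh t ^ (-γ - 1) * Real.cosh t) t := by
  exact (((hasDerivAt_coshRpow (-γ - 1) t).const_mul (-γ)).mul (Real.hasDerivAt_sinh t)).congr_deriv (by ring)

lemma w2_le (γ t : ℝ) (hγ : 0 ≤ γ) :
    (-γ) * ((-γ - 1) * Real.cosh t ^ (-γ - 1 - 1) * Real.sinh t) * Real.sinh t
      + (-γ) * Real.cosh t ^ (-γ - 1) * Real.cosh t ≤ γ ^ 2 * Real.cosh t ^ (-γ) := by
  have hC := Real.cosh_pos t
  have h1 : Real.cosh t ^ (-γ - 1) * Real.cosh t = Real.cosh t ^ (-γ) := by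
    rw [← Real.rpow_add_one hC.ne' (-γ - 1)]; norm_num
  have h2 : Real.cosh t ^ (-γ - 1 - 1) * Real.cosh t = Real.cosh t ^ (-γ - 1) := by
    rw [← Real.rpow_add_one hC.ne' (-γ - 1 - 1)]; norm_num
  have hX : 0 < Real.cosh t ^ (-γ - 1 - 1) := Real.rpow_pos_of_pos hC _
  have hs : Real.sinh t ^ 2 ≤ Real.cosh t ^ 2 := by
    have := Real.cosh_sq t; nlinarith
  have h3 : Real.cosh t ^ (-γ - 1 - 1) * Real.cosh t ^ 2 = Real.cosh t ^ (-γ) := by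
    rw [pow_two, ← mul_assoc, h2, h1]
  have h4 : γ * (γ + 1) * (Real.cosh t ^ (-γ - 1 - 1) * Real.cosh t ^ 2)
      = γ * (γ + 1) * Real.cosh t ^ (-γ) := by rw [h3]
  nlinarith [mul_le_mul_of_nonneg_left hs (mul_nonneg (mul_nonneg hγ (by linarith : (0:ℝ) ≤ γ + 1)) hX.le)]


lemma cd2_derivs {f : ℝ → ℝ} (hf : ContDiff ℝ 2 f) :
    (∀ x, HasDerivAt f (deriv f x) x) ∧ (∀ x, HasDerivAt (deriv f) (deriv (deriv f) x) x) := by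
  have h2 : ContDiff ℝ ((1 : ℕ) + 1) f := by exact_mod_cast hf
  have h := contDiff_succ_iff_deriv.mp h2
  constructor
  · exact fun x => (h.1 x).hasDerivAt
  · exact fun x => ((h.2.2.differentiable (by simp)) x).hasDerivAt

lemma slice1 {φ : ℝ × ℝ → ℝ} (hφ : ContDiff ℝ 2 φ) (t : ℝ) :
    ContDiff ℝ 2 (fun y : ℝ => φ (y, t)) := hφ.comp (contDiff_id.prodMk contDiff_const)

lemma slice2 {φ : ℝ × ℝ → ℝ} (hφ : ContDiff ℝ 2 φ) (s : ℝ) :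
    ContDiff ℝ 2 (fun y : ℝ => φ (s, y)) := hφ.comp (contDiff_const.prodMk contDiff_id)

lemma hasDerivAt_cosh_lin (β c x : ℝ) :
    HasDerivAt (fun x => Real.cosh (β * (x - c))) (β * Real.sinh (β * (x - c))) x := by
  have h := (Real.hasDerivAt_cosh (β * (x - c))).comp x
    (((hasDerivAt_id x).sub_const c).const_mul β)
  exact h.congr_deriv (by ring)

lemma hasDerivAt_sinh_lin (β c x : ℝ) :
    HasDerivAt (fun x => β * Real.sinh (β * (x - c))) (β ^ 2 * Real.cosh (β * (x - c))) x := by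
  have h := ((Real.hasDerivAt_sinh (β * (x - c))).comp x
    (((hasDerivAt_id x).sub_const c).const_mul β)).const_mul β
  exact h.congr_deriv (by ring)

lemma hasDerivAt_cosh_lin' (β x : ℝ) :
    HasDerivAt (fun x => Real.cosh (β * x)) (β * Real.sinh (β * x)) x := by
  have h := (Real.hasDerivAt_cosh (β * x)).comp x ((hasDerivAt_id x).const_mul β)
  exact h.congr_deriv (by ring)

lemma hasDerivAt_sinh_lin' (β x : ℝ) :
    HasDerivAt (fun x => β * Real.sinh (β * x)) (β ^ 2 * Real.cosh (β * x)) x := by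
  have h := ((Real.hasDerivAt_sinh (β * x)).comp x ((hasDerivAt_id x).const_mul β)).const_mul β
  exact h.congr_deriv (by ring)

lemma abs_le_cosh (x : ℝ) : |x| ≤ Real.cosh x := by
  have h1 : |x| ≤ Real.sinh |x| := Real.self_le_sinh_iff.mpr (abs_nonneg x)
  have h2 : Real.sinh |x| < Real.cosh |x| := Real.sinh_lt_cosh _
  calc |x| ≤ Real.sinh |x| := h1
  _ ≤ Real.cosh |x| := h2.le
  _ = Real.cosh x := Real.cosh_abs x

lemma pdss_neg (φ : ℝ × ℝ → ℝ) (s t : ℝ) : pdss (fun p => -φ p) s t = -(pdss φ s t) := by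
  unfold pdss
  have h : (fun x => deriv (fun y => -φ (y, t)) x) = fun x => -(deriv (fun y => φ (y, t)) x) :=
    funext fun x => deriv.neg
  rw [h]
  exact deriv.neg

lemma pdtt_neg (φ : ℝ × ℝ → ℝ) (s t : ℝ) : pdtt (fun p => -φ p) s t = -(pdtt φ s t) := by
  unfold pdtt
  have h : (fun x => deriv (fun y => -φ (s, y)) x) = fun x => -(deriv (fun y => φ (s, y)) x) :=
    funext fun x => deriv.neg
  rw [h]
  exact deriv.neg

lemma pdss_reflect (φ : ℝ × ℝ → ℝ) (s t : ℝ) :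
    pdss (fun p => φ (p.1, -p.2)) s t = pdss φ s (-t) := rfl

lemma pdtt_reflect (φ : ℝ × ℝ → ℝ) (s t : ℝ) :
    pdtt (fun p => φ (p.1, -p.2)) s t = pdtt φ s (-t) := by
  unfold pdtt
  have h : (fun x => deriv (fun y => φ (s, -y)) x)
      = fun x => -(deriv (fun y => φ (s, y)) (-x)) :=
    funext fun x => deriv_comp_neg (f := fun y => φ (s, y)) x
  rw [h]
  have h2 : (fun x : ℝ => -(deriv (fun y => φ (s, y)) (-x)))
      = fun x => -((fun z => deriv (fun y => φ (s, y)) z) (-x)) := rfl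
  rw [h2, deriv.fun_neg (f := fun x => (fun z => deriv (fun y => φ (s, y)) z) (-x)),
    deriv_comp_neg (f := fun z => deriv (fun y => φ (s, y)) z), neg_neg]

lemma vStar_neg_sq (t : ℝ) : vStar (-t) ^ 2 = vStar t ^ 2 := by
  unfold vStar
  rw [neg_div, Real.tanh_neg]
  ring

set_option maxHeartbeats 1000000 in
lemma core (γ δ T M A : ℝ) (hγ : 0 < γ) (hδ : 0 < δ) (hM : 0 ≤ M)
    (hc : ∀ t, T ≤ t → 1 - 3 * (vStar t) ^ 2 ≤ -(δ + γ ^ 2))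
    (a : ℝ → ℝ) (ha : ∀ s, 0 < a s ∧ a s ≤ A)
    (φ g : ℝ × ℝ → ℝ) (hφ : ContDiff ℝ 2 φ)
    (B : ℝ) (hB : ∀ p, φ p ≤ B)
    (hbd : ∀ s : ℝ, φ (s, T) ≤ M * Real.cosh T ^ (-γ))
    (hg : ∀ s t : ℝ, -(δ * M * Real.cosh t ^ (-γ)) ≤ g (s, t))
    (heq : ∀ s t : ℝ,
      a s * pdss φ s t + pdtt φ s t + (1 - 3 * (vStar t) ^ 2) * φ (s, t) = g (s, t)) :
    ∀ s t : ℝ, T ≤ t → φ (s, t) ≤ M * Real.cosh t ^ (-γ) := by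
  intro s t ht
  by_contra hlt
  push_neg at hlt
  -- the function ψε = M w + ε ρ − φ
  set A' : ℝ := max A 1 with hA'
  have hA'pos : 0 < A' + 1 := by positivity
  set β : ℝ := Real.sqrt (δ / (A' + 1)) with hβ
  have hβpos : 0 < β := Real.sqrt_pos.mpr (by positivity)
  have hβ2 : β ^ 2 * (A' + 1) = δ := by
    rw [hβ, Real.sq_sqrt (by positivity : (0:ℝ) ≤ δ / (A' + 1))]
    field_simp
  set w : ℝ → ℝ := fun u => Real.cosh u ^ (-γ) with hw
  have hwpos : ∀ u, 0 < w u := fun u => Real.rpow_pos_of_pos (Real.cosh_pos u) _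
  set ρ : ℝ × ℝ → ℝ := fun p => Real.cosh (β * p.1) * Real.cosh (β * (p.2 - T)) with hρ
  have hρpos : ∀ p, 0 < ρ p := fun p => mul_pos (Real.cosh_pos _) (Real.cosh_pos _)
  set ψ : ℝ × ℝ → ℝ := fun p => M * w p.2 - φ p with hψ
  have hp : ψ (s, t) < 0 := by show M * (Real.cosh t ^ (-γ)) - φ (s,t) < 0; linarith
  set ε : ℝ := -ψ (s, t) / (2 * ρ (s, t)) with hε
  have hεpos : 0 < ε := div_pos (by linarith) (by positivity)
  set ψε : ℝ × ℝ → ℝ := fun p => ψ p + ε * ρ p with hψε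
  have hψεp : ψε (s, t) < 0 := by
    have : ψε (s, t) = ψ (s, t) / 2 := by
      show (ψ (s, t) + ε * ρ (s, t)) = ψ (s, t) / 2
      have hk : ε * (2 * ρ (s, t)) = -ψ (s, t) := by
        rw [hε]; exact div_mul_cancel₀ _ (mul_pos two_pos (hρpos _)).ne'
      linarith
    rw [this]; linarith
  -- continuity
  have hwcont : Continuous (fun p : ℝ × ℝ => M * w p.2) := by
    apply Continuous.mul continuous_const
    exact (Real.continuous_cosh.comp continuous_snd).rpow_const
      (fun x => Or.inl (Real.cosh_pos _).ne')
  have hρcont : Continuous ρ := by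
    apply Continuous.mul
    · exact Real.continuous_cosh.comp (continuous_const.mul continuous_fst)
    · exact Real.continuous_cosh.comp (continuous_const.mul (continuous_snd.sub continuous_const))
  have hψεcont : Continuous ψε :=
    ((hwcont.sub hφ.continuous).add (continuous_const.mul hρcont))
  -- the sublevel set is compact
  set S : Set (ℝ × ℝ) := {q | T ≤ q.2 ∧ ψε q ≤ ψε (s, t)} with hS
  have hSclosed : IsClosed S :=
    (isClosed_le continuous_const continuous_snd).inter (isClosed_le hψεcont continuous_const)
  set R : ℝ := (ψε (s, t) + B) / ε with hR
  have hρbound : ∀ q ∈ S, ρ q ≤ R := by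
    intro q hq
    have h1 : ψε q ≤ ψε (s, t) := hq.2
    have h2 : φ q ≤ B := hB q
    have h4 : 0 ≤ M * w q.2 := mul_nonneg hM (hwpos q.2).le
    have h1' : M * w q.2 - φ q + ε * ρ q ≤ ψε (s, t) := h1
    have : ε * ρ q ≤ ψε (s, t) + B := by linarith
    rw [hR, le_div_iff₀ hεpos]
    linarith [this]
  have hSbdd : S ⊆ Set.Icc (-(R / β)) (R / β) ×ˢ Set.Icc (T - R / β) (T + R / β) := by
    intro q hq
    have hρq := hρbound q hq
    have hexp : ρ q = Real.cosh (β * q.1) * Real.cosh (β * (q.2 - T)) := rfl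
    have hf1 : Real.cosh (β * q.1) ≤ R := by
      have := Real.one_le_cosh (β * (q.2 - T))
      nlinarith [Real.cosh_pos (β * q.1), hρq, hexp]
    have hf2 : Real.cosh (β * (q.2 - T)) ≤ R := by
      have := Real.one_le_cosh (β * q.1)
      nlinarith [Real.cosh_pos (β * (q.2 - T)), hρq, hexp]
    have h1 : |β * q.1| ≤ R := (abs_le_cosh _).trans hf1
    have h2 : |β * (q.2 - T)| ≤ R := (abs_le_cosh _).trans hf2
    rw [abs_mul, abs_of_pos hβpos] at h1 h2
    have hq1 : |q.1| ≤ R / β := by rw [le_div_iff₀ hβpos]; linarith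
    have hq2 : |q.2 - T| ≤ R / β := by rw [le_div_iff₀ hβpos]; linarith
    rw [abs_le] at hq1 hq2
    exact ⟨⟨by linarith [hq1.1], hq1.2⟩, ⟨by linarith [hq2.1], by linarith [hq2.2]⟩⟩
  have hScompact : IsCompact S :=
    (isCompact_Icc.prod isCompact_Icc).of_isClosed_subset hSclosed hSbdd
  have hSne : ((s, t) : ℝ × ℝ) ∈ S := ⟨ht, le_refl _⟩
  obtain ⟨p₀, hp₀S, hp₀min⟩ := hScompact.exists_isMinOn ⟨_, hSne⟩ hψεcont.continuousOn
  have hglob : ∀ q : ℝ × ℝ, T ≤ q.2 → ψε p₀ ≤ ψε q := by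
    intro q hq
    by_cases h : ψε q ≤ ψε (s, t)
    · exact hp₀min ⟨hq, h⟩
    · exact le_trans (hp₀min hSne) (le_of_not_ge h)
  have hψε0 : ψε p₀ < 0 := lt_of_le_of_lt (hp₀min hSne) hψεp
  -- interior
  have hTlt : T < p₀.2 := by
    rcases lt_or_eq_of_le hp₀S.1 with h | h
    · exact h
    · exfalso
      have h1 : φ (p₀.1, T) ≤ M * Real.cosh T ^ (-γ) := hbd p₀.1
      have h2 : ψε p₀ = M * w p₀.2 - φ p₀ + ε * ρ p₀ := rfl
      have h3 : φ p₀ = φ (p₀.1, T) := by rw [h, Prod.mk.eta]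
      have h4 : w p₀.2 = Real.cosh T ^ (-γ) := by rw [← h]
      nlinarith [hρpos p₀, h2, hψε0]
  obtain ⟨s₀, t₀⟩ := p₀
  have hTlt' : T ≤ t₀ := le_of_lt hTlt
  -- ψε has a local minimum at (s₀, t₀)
  have hopen : IsOpen {q : ℝ × ℝ | T < q.2} := isOpen_lt continuous_const continuous_snd
  have hlocal : IsLocalMin ψε (s₀, t₀) :=
    Filter.eventually_of_mem (hopen.mem_nhds hTlt) (fun q hq => hglob q (le_of_lt hq))
  have hmin1 : IsLocalMin (fun x => ψε (x, t₀)) s₀ := by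
    have hcont : Tendsto (fun x : ℝ => (x, t₀)) (nhds s₀) (nhds ((s₀, t₀) : ℝ × ℝ)) :=
      (continuous_id.prodMk continuous_const).tendsto s₀
    exact hcont.eventually hlocal
  have hmin2 : IsLocalMin (fun y => ψε (s₀, y)) t₀ := by
    have hcont : Tendsto (fun y : ℝ => (s₀, y)) (nhds t₀) (nhds ((s₀, t₀) : ℝ × ℝ)) :=
      (continuous_const.prodMk continuous_id).tendsto t₀
    exact hcont.eventually hlocal
  -- derivatives of the s-slice
  obtain ⟨hL1, hL2⟩ := cd2_derivs (slice1 hφ t₀)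
  set d1 : ℝ → ℝ := deriv (fun y => φ (y, t₀)) with hd1
  have hF1' : ∀ x, HasDerivAt (fun x => ψε (x, t₀))
      (ε * (β * Real.sinh (β * x) * Real.cosh (β * (t₀ - T))) - d1 x) x := by
    intro x
    have h1 : HasDerivAt (fun x : ℝ => M * w t₀ - φ (x, t₀)) (0 - d1 x) x :=
      (hasDerivAt_const x (M * w t₀)).sub (hL1 x)
    have h2 : HasDerivAt (fun x : ℝ => Real.cosh (β * x) * Real.cosh (β * (t₀ - T)))
        (β * Real.sinh (β * x) * Real.cosh (β * (t₀ - T))) x :=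
      (hasDerivAt_cosh_lin' β x).mul_const _
    exact ((h1.add (h2.const_mul ε)).congr_deriv (by ring))
  have hF1'' : HasDerivAt
      (fun x => ε * (β * Real.sinh (β * x) * Real.cosh (β * (t₀ - T))) - d1 x)
      (ε * (β ^ 2 * Real.cosh (β * s₀) * Real.cosh (β * (t₀ - T))) - pdss φ s₀ t₀) s₀ := by
    have h2 := ((hasDerivAt_sinh_lin' β s₀).mul_const (Real.cosh (β * (t₀ - T)))).const_mul ε
    have h3 : HasDerivAt d1 (pdss φ s₀ t₀) s₀ := hL2 s₀
    exact (h2.sub h3).congr_deriv (by ring)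
  have key1 : 0 ≤ ε * (β ^ 2 * Real.cosh (β * s₀) * Real.cosh (β * (t₀ - T))) - pdss φ s₀ t₀ :=
    deriv2_nonneg_of_isLocalMin hF1' hF1'' hmin1
  -- derivatives of the t-slice
  obtain ⟨hK1, hK2⟩ := cd2_derivs (slice2 hφ s₀)
  set d2 : ℝ → ℝ := deriv (fun y => φ (s₀, y)) with hd2
  have hF2' : ∀ y, HasDerivAt (fun y => ψε (s₀, y))
      (M * ((-γ) * Real.cosh y ^ (-γ - 1) * Real.sinh y)
        + ε * (Real.cosh (β * s₀) * (β * Real.sinh (β * (y - T)))) - d2 y) y := by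
    intro y
    have h1 := (hasDerivAt_w γ y).const_mul M
    have h2 := ((hasDerivAt_cosh_lin β T y).const_mul (Real.cosh (β * s₀))).const_mul ε
    exact ((h1.sub (hK1 y)).add h2).congr_deriv (by ring)
  have hF2'' : HasDerivAt
      (fun y => M * ((-γ) * Real.cosh y ^ (-γ - 1) * Real.sinh y)
        + ε * (Real.cosh (β * s₀) * (β * Real.sinh (β * (y - T)))) - d2 y)
      (M * ((-γ) * ((-γ - 1) * Real.cosh t₀ ^ (-γ - 1 - 1) * Real.sinh t₀) * Real.sinh t₀
          + (-γ) * Real.cosh t₀ ^ (-γ - 1) * Real.cosh t₀)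
        + ε * (Real.cosh (β * s₀) * (β ^ 2 * Real.cosh (β * (t₀ - T)))) - pdtt φ s₀ t₀) t₀ := by
    have h1 := (hasDerivAt_w' γ t₀).const_mul M
    have h2 := ((hasDerivAt_sinh_lin β T t₀).const_mul (Real.cosh (β * s₀))).const_mul ε
    have h3 : HasDerivAt d2 (pdtt φ s₀ t₀) t₀ := hK2 t₀
    exact ((h1.add h2).sub h3).congr_deriv (by ring)
  have key2 : 0 ≤ M * ((-γ) * ((-γ - 1) * Real.cosh t₀ ^ (-γ - 1 - 1) * Real.sinh t₀) * Real.sinh t₀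
          + (-γ) * Real.cosh t₀ ^ (-γ - 1) * Real.cosh t₀)
        + ε * (Real.cosh (β * s₀) * (β ^ 2 * Real.cosh (β * (t₀ - T)))) - pdtt φ s₀ t₀ :=
    deriv2_nonneg_of_isLocalMin hF2' hF2'' hmin2
  -- collect the estimates at the minimum point
  set W : ℝ := Real.cosh t₀ ^ (-γ) with hW
  set R₀ : ℝ := Real.cosh (β * s₀) * Real.cosh (β * (t₀ - T)) with hR₀
  have hWpos : 0 < W := Real.rpow_pos_of_pos (Real.cosh_pos _) _
  have hR₀pos : 0 < R₀ := mul_pos (Real.cosh_pos _) (Real.cosh_pos _)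
  have hw2le : M * ((-γ) * ((-γ - 1) * Real.cosh t₀ ^ (-γ - 1 - 1) * Real.sinh t₀) * Real.sinh t₀
      + (-γ) * Real.cosh t₀ ^ (-γ - 1) * Real.cosh t₀) ≤ M * (γ ^ 2 * W) :=
    mul_le_mul_of_nonneg_left (w2_le γ t₀ hγ.le) hM
  have hcb : 1 - 3 * (vStar t₀) ^ 2 ≤ -(δ + γ ^ 2) := hc t₀ hTlt'
  have heq0 := heq s₀ t₀
  have hA'A : A ≤ A' := le_max_left A 1
  have hA'1 : (1:ℝ) ≤ A' := le_max_right A 1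
  have hg0 := hg s₀ t₀
  have haA := ha s₀
  have hφlow : M * W + ε * R₀ ≤ φ (s₀, t₀) := by
    have h0 : ψε (s₀, t₀) < 0 := hψε0
    have h0' : M * W - φ (s₀, t₀) + ε * R₀ < 0 := h0
    linarith
  have e1 : a s₀ * pdss φ s₀ t₀ ≤ A' * (ε * (β ^ 2 * R₀)) := by
    rcases le_or_gt 0 (pdss φ s₀ t₀) with h | h
    · have h1 : a s₀ * pdss φ s₀ t₀ ≤ A' * pdss φ s₀ t₀ :=
        mul_le_mul_of_nonneg_right (le_trans haA.2 hA'A) h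
      have h2 : pdss φ s₀ t₀ ≤ ε * (β ^ 2 * R₀) := by rw [hR₀]; nlinarith [key1]
      nlinarith
    · have h1 : a s₀ * pdss φ s₀ t₀ ≤ 0 := mul_nonpos_of_nonneg_of_nonpos haA.1.le h.le
      have hX : 0 ≤ ε * (β ^ 2 * R₀) := by positivity
      nlinarith [h1, hX, mul_le_mul_of_nonneg_right hA'1 hX]
  have e2 : pdtt φ s₀ t₀ ≤ M * (γ ^ 2 * W) + ε * (β ^ 2 * R₀) := by
    have h2 : ε * (Real.cosh (β * s₀) * (β ^ 2 * Real.cosh (β * (t₀ - T)))) = ε * (β ^ 2 * R₀) := by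
      rw [hR₀]; ring
    nlinarith [key2, hw2le]
  have e3 : (1 - 3 * (vStar t₀) ^ 2) * φ (s₀, t₀) ≤
      -(δ + γ ^ 2) * (M * W) + -(δ + γ ^ 2) * (ε * R₀) := by
    have hcneg : 1 - 3 * (vStar t₀) ^ 2 ≤ 0 := by nlinarith [sq_nonneg γ]
    have h1 : (1 - 3 * (vStar t₀) ^ 2) * φ (s₀, t₀) ≤ (1 - 3 * (vStar t₀) ^ 2) * (M * W + ε * R₀) :=
      mul_le_mul_of_nonpos_left hφlow hcneg
    have h2 : (1 - 3 * (vStar t₀) ^ 2) * (M * W + ε * R₀) ≤ -(δ + γ ^ 2) * (M * W + ε * R₀) :=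
      mul_le_mul_of_nonneg_right hcb (by positivity)
    nlinarith
  have hg0' : -(δ * M * W) ≤ g (s₀, t₀) := hg0
  have hfin : 0 < ε * (γ ^ 2 * R₀) := by positivity
  have hkey : A' * (ε * (β ^ 2 * R₀)) + ε * (β ^ 2 * R₀) = ε * R₀ * (β ^ 2 * (A' + 1)) := by ring
  rw [hβ2] at hkey
  linarith [heq0, hg0', e1, e2, e3, hkey, hfin]
theorem stmt7 (γ : ℝ) (hγ : γ ∈ Set.Ioo 0 (Real.sqrt 2)) :
    ∃ C : ℝ, 0 < C ∧
      ∀ (a : ℝ → ℝ) (a₀ A : ℝ), Continuous a → 0 < a₀ →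
        (∀ s : ℝ, a₀ ≤ a s ∧ a s ≤ A) →
      ∀ φ g : ℝ × ℝ → ℝ, ContDiff ℝ 2 φ → Continuous g →
      ∀ Mφ G : ℝ, (∀ p : ℝ × ℝ, |φ p| ≤ Mφ) →
        (∀ s t : ℝ, |g (s, t)| * Real.cosh t ^ γ ≤ G) →
        (∀ s t : ℝ,
          a s * pdss φ s t + pdtt φ s t + (1 - 3 * (vStar t) ^ 2) * φ (s, t) = g (s, t)) →
        ∀ s t : ℝ, |φ (s, t)| ≤ C * (Mφ + G) * Real.cosh t ^ (-γ) := by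
  obtain ⟨hγ0, hγ2⟩ := hγ
  have hγsq : γ ^ 2 < 2 := by
    have h := Real.sq_sqrt (by norm_num : (0:ℝ) ≤ 2)
    nlinarith [Real.sqrt_nonneg 2]
  set δ : ℝ := (2 - γ ^ 2) / 2 with hδdef
  have hδ : 0 < δ := div_pos (by linarith) two_pos
  have hsq2 : (0:ℝ) < Real.sqrt 2 := Real.sqrt_pos.mpr two_pos
  set T : ℝ := Real.sqrt 2 * (3 / δ) with hTdef
  have hT0 : 0 < T := by positivity
  have hc : ∀ u : ℝ, T ≤ u → 1 - 3 * (vStar u) ^ 2 ≤ -(δ + γ ^ 2) := by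
    intro u hu
    have hx : 3 / δ ≤ u / Real.sqrt 2 := by
      rw [le_div_iff₀ hsq2]
      calc 3 / δ * Real.sqrt 2 = T := by rw [hTdef]; ring
      _ ≤ u := hu
    have hpos : 0 < Real.cosh (u / Real.sqrt 2) := Real.cosh_pos _
    have hcosh1 : (1:ℝ) ≤ Real.cosh (u / Real.sqrt 2) := Real.one_le_cosh _
    have hcoshx : 3 / δ ≤ Real.cosh (u / Real.sqrt 2) :=
      le_trans hx (le_trans (le_abs_self _) (abs_le_cosh _))
    have hcosh2 : 3 / δ ≤ Real.cosh (u / Real.sqrt 2) ^ 2 := by nlinarith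
    have htanh : vStar u ^ 2 = 1 - 1 / Real.cosh (u / Real.sqrt 2) ^ 2 := by
      unfold vStar
      rw [Real.tanh_eq_sinh_div_cosh, div_pow]
      have hs := Real.cosh_sq (u / Real.sqrt 2)
      field_simp
      linarith
    rw [htanh]
    have h3 : 3 / Real.cosh (u / Real.sqrt 2) ^ 2 ≤ δ := by
      rw [div_le_iff₀ (by positivity)]
      have := (div_le_iff₀ hδ).mp hcosh2
      linarith
    have h3' : 3 * (1 / Real.cosh (u / Real.sqrt 2) ^ 2) ≤ δ := by
      rw [mul_one_div]; exact h3
    have hδsum : δ + γ ^ 2 = 2 - δ := by rw [hδdef]; ring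
    nlinarith
  set C : ℝ := max (Real.cosh T ^ γ) (1 / δ) with hCdef
  have hcoshT : 0 < Real.cosh T := Real.cosh_pos T
  have hCpos : 0 < C := lt_of_lt_of_le (Real.rpow_pos_of_pos hcoshT γ) (le_max_left _ _)
  have hrpow1 : Real.cosh T ^ γ * Real.cosh T ^ (-γ) = 1 := by
    rw [← Real.rpow_add hcoshT]; norm_num
  have hwTpos : 0 < Real.cosh T ^ (-γ) := Real.rpow_pos_of_pos hcoshT _
  have hC1 : 1 ≤ C * Real.cosh T ^ (-γ) := by
    have h := mul_le_mul_of_nonneg_right (le_max_left (Real.cosh T ^ γ) (1 / δ)) hwTpos.le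
    rw [hrpow1] at h; exact h
  have hδC : 1 ≤ δ * C := by
    have h := mul_le_mul_of_nonneg_left (le_max_right (Real.cosh T ^ γ) (1 / δ)) hδ.le
    rw [mul_one_div, div_self hδ.ne'] at h; exact h
  refine ⟨C, hCpos, ?_⟩
  intro a a₀ A hacont ha₀ haa φ g hφ hgcont Mφ G hMφ hG heq
  have hM0 : 0 ≤ Mφ := le_trans (abs_nonneg _) (hMφ (0, 0))
  have hG0 : 0 ≤ G := le_trans (mul_nonneg (abs_nonneg _)
    (Real.rpow_pos_of_pos (Real.cosh_pos 0) γ).le) (hG 0 0)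
  have hSig : 0 ≤ Mφ + G := by linarith
  set M : ℝ := C * (Mφ + G) with hMdef
  have hMnn : 0 ≤ M := mul_nonneg hCpos.le hSig
  have ha' : ∀ s, 0 < a s ∧ a s ≤ A := fun s => ⟨lt_of_lt_of_le ha₀ (haa s).1, (haa s).2⟩
  have hgabs : ∀ s t : ℝ, |g (s, t)| ≤ G * Real.cosh t ^ (-γ) := by
    intro s t
    have hX : 0 < Real.cosh t ^ γ := Real.rpow_pos_of_pos (Real.cosh_pos t) γ
    have h := hG s t
    rw [Real.rpow_neg (Real.cosh_pos t).le, ← div_eq_mul_inv, le_div_iff₀ hX]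
    exact h
  have hMw : ∀ t : ℝ, Mφ ≤ M * Real.cosh t ^ (-γ) → True := fun _ _ => trivial
  have hwmono : ∀ t : ℝ, |t| ≤ T → Real.cosh T ^ (-γ) ≤ Real.cosh t ^ (-γ) := by
    intro t htT
    have h1 : Real.cosh t ≤ Real.cosh T := Real.cosh_le_cosh.mpr (by
      rw [abs_of_pos hT0]; exact htT)
    exact Real.rpow_le_rpow_of_nonpos (Real.cosh_pos t) h1 (neg_nonpos.mpr hγ0.le)
  have hbd : ∀ u : ℝ, |u| ≤ T → Mφ ≤ M * Real.cosh u ^ (-γ) := by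
    intro u hu
    have h1 := hwmono u hu
    have h2 : Mφ ≤ M * Real.cosh T ^ (-γ) := by
      have : (Mφ + G) * 1 ≤ (Mφ + G) * (C * Real.cosh T ^ (-γ)) :=
        mul_le_mul_of_nonneg_left hC1 hSig
      rw [hMdef]; nlinarith
    nlinarith [hMnn]
  have hbdT : ∀ s : ℝ, φ (s, T) ≤ M * Real.cosh T ^ (-γ) := by
    intro s
    exact le_trans (le_trans (le_abs_self _) (hMφ (s, T))) (hbd T (by rw [abs_of_pos hT0]))
  have hbdT' : ∀ s : ℝ, -φ (s, T) ≤ M * Real.cosh T ^ (-γ) := by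
    intro s
    exact le_trans (le_trans (neg_le_abs _) (hMφ (s, T))) (hbd T (by rw [abs_of_pos hT0]))
  have hbdTr : ∀ s : ℝ, φ (s, -T) ≤ M * Real.cosh T ^ (-γ) := by
    intro s
    exact le_trans (le_trans (le_abs_self _) (hMφ (s, -T))) (hbd T (by rw [abs_of_pos hT0]))
  have hbdTr' : ∀ s : ℝ, -φ (s, -T) ≤ M * Real.cosh T ^ (-γ) := by
    intro s
    exact le_trans (le_trans (neg_le_abs _) (hMφ (s, -T))) (hbd T (by rw [abs_of_pos hT0]))
  have hGδM : G ≤ δ * M := by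
    have h : (Mφ + G) * 1 ≤ (Mφ + G) * (δ * C) := mul_le_mul_of_nonneg_left hδC hSig
    rw [hMdef]; nlinarith
  have hglow : ∀ s t : ℝ, -(δ * M * Real.cosh t ^ (-γ)) ≤ g (s, t) := by
    intro s t
    have h1 := hgabs s t
    have hw : 0 < Real.cosh t ^ (-γ) := Real.rpow_pos_of_pos (Real.cosh_pos t) _
    have h2 : G * Real.cosh t ^ (-γ) ≤ δ * M * Real.cosh t ^ (-γ) :=
      mul_le_mul_of_nonneg_right hGδM hw.le
    have h3 : -g (s, t) ≤ |g (s, t)| := neg_le_abs _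
    linarith
  have hghigh : ∀ s t : ℝ, -(δ * M * Real.cosh t ^ (-γ)) ≤ -g (s, t) := by
    intro s t
    have h1 := hgabs s t
    have hw : 0 < Real.cosh t ^ (-γ) := Real.rpow_pos_of_pos (Real.cosh_pos t) _
    have h2 : G * Real.cosh t ^ (-γ) ≤ δ * M * Real.cosh t ^ (-γ) :=
      mul_le_mul_of_nonneg_right hGδM hw.le
    have h3 : g (s, t) ≤ |g (s, t)| := le_abs_self _
    linarith
  -- upper bound, t ≥ T
  have hup : ∀ s t : ℝ, T ≤ t → φ (s, t) ≤ M * Real.cosh t ^ (-γ) :=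
    core γ δ T M A hγ0 hδ hMnn hc a ha' φ g hφ Mφ
      (fun p => le_trans (le_abs_self _) (hMφ p)) hbdT hglow heq
  -- lower bound, t ≥ T
  have hdn : ∀ s t : ℝ, T ≤ t → -φ (s, t) ≤ M * Real.cosh t ^ (-γ) := by
    have heq2 : ∀ s t : ℝ, a s * pdss (fun p => -φ p) s t + pdtt (fun p => -φ p) s t
        + (1 - 3 * (vStar t) ^ 2) * (fun p : ℝ × ℝ => -φ p) (s, t) = -g (s, t) := by
      intro s t
      rw [pdss_neg, pdtt_neg]
      have := heq s t
      simp only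
      linarith
    exact core γ δ T M A hγ0 hδ hMnn hc a ha' (fun p => -φ p) (fun p => -g p) hφ.neg Mφ
      (fun p => le_trans (neg_le_abs _) (hMφ p)) hbdT' hghigh heq2
  -- reflected versions, for t ≤ -T
  have hφr : ContDiff ℝ 2 (fun p : ℝ × ℝ => φ (p.1, -p.2)) :=
    hφ.comp (contDiff_fst.prodMk contDiff_snd.neg)
  have heqr : ∀ s t : ℝ, a s * pdss (fun p : ℝ × ℝ => φ (p.1, -p.2)) s t
      + pdtt (fun p : ℝ × ℝ => φ (p.1, -p.2)) s t
      + (1 - 3 * (vStar t) ^ 2) * (fun p : ℝ × ℝ => φ (p.1, -p.2)) (s, t)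
      = g (s, -t) := by
    intro s t
    rw [pdss_reflect, pdtt_reflect]
    have h := heq s (-t)
    rw [vStar_neg_sq] at h
    simp only
    linarith
  have hglowr : ∀ s t : ℝ, -(δ * M * Real.cosh t ^ (-γ)) ≤ g (s, -t) := by
    intro s t
    have := hglow s (-t)
    rwa [Real.cosh_neg] at this
  have hghighr : ∀ s t : ℝ, -(δ * M * Real.cosh t ^ (-γ)) ≤ -g (s, -t) := by
    intro s t
    have := hghigh s (-t)
    rwa [Real.cosh_neg] at this
  have hupr : ∀ s t : ℝ, T ≤ t → φ (s, -t) ≤ M * Real.cosh t ^ (-γ) :=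
    core γ δ T M A hγ0 hδ hMnn hc a ha' (fun p => φ (p.1, -p.2)) (fun p => g (p.1, -p.2))
      hφr Mφ (fun p => le_trans (le_abs_self _) (hMφ _)) hbdTr hglowr heqr
  have hdnr : ∀ s t : ℝ, T ≤ t → -φ (s, -t) ≤ M * Real.cosh t ^ (-γ) := by
    have heqr2 : ∀ s t : ℝ, a s * pdss (fun p : ℝ × ℝ => -φ (p.1, -p.2)) s t
        + pdtt (fun p : ℝ × ℝ => -φ (p.1, -p.2)) s t
        + (1 - 3 * (vStar t) ^ 2) * (fun p : ℝ × ℝ => -φ (p.1, -p.2)) (s, t)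
        = -g (s, -t) := by
      intro s t
      have e1 : pdss (fun p : ℝ × ℝ => -φ (p.1, -p.2)) s t = -(pdss φ s (-t)) :=
        (pdss_neg (fun p => φ (p.1, -p.2)) s t).trans (by rw [pdss_reflect])
      have e2 : pdtt (fun p : ℝ × ℝ => -φ (p.1, -p.2)) s t = -(pdtt φ s (-t)) :=
        (pdtt_neg (fun p => φ (p.1, -p.2)) s t).trans (by rw [pdtt_reflect])
      rw [e1, e2]
      have h := heq s (-t)
      rw [vStar_neg_sq] at h
      simp only
      linarith
    exact core γ δ T M A hγ0 hδ hMnn hc a ha' (fun p => -φ (p.1, -p.2))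
      (fun p => -g (p.1, -p.2)) hφr.neg Mφ
      (fun p => le_trans (neg_le_abs _) (hMφ _)) hbdTr' hghighr heqr2
  -- conclusion
  intro s t
  have hgoal : C * (Mφ + G) * Real.cosh t ^ (-γ) = M * Real.cosh t ^ (-γ) := by
    rw [hMdef]
  rw [hgoal]
  rcases le_total T t with h | h
  · exact abs_le.mpr ⟨by linarith [hdn s t h], hup s t h⟩
  · rcases le_total t (-T) with h2 | h2
    · have hT' : T ≤ -t := by linarith
      have h1 := hupr s (-t) hT'
      have h2' := hdnr s (-t) hT'
      rw [neg_neg] at h1 h2'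
      rw [← Real.cosh_neg t]
      exact abs_le.mpr ⟨by linarith [h2'], h1⟩
    · have habs : |t| ≤ T := abs_le.mpr ⟨by linarith, h⟩
      exact le_trans (hMφ (s, t)) (hbd t habs)
end
end

section
/- Let 0 < β ≤ B and let V : ℝ³ → ℝ be continuous with β ≤ V(x) ≤ B for all x ∈ ℝ³. If φ : ℝ³ → ℝ is a bounded C² function and g : ℝ³ → ℝ is a bounded continuous function such that Δφ(x) − V(x) φ(x) = g(x) for all x ∈ ℝ³, then sup_{ℝ³} |φ| ≤ β^{−1} sup_{ℝ³} |g|. In particular, the only bounded C² solution of Δφ = V φ on ℝ³ is φ ≡ 0. -/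
noncomputable section

open Real

/-- The Laplacian of a function on `ℝ³`, as the sum of the second derivatives along the
coordinate directions. -/
def lap (φ : EuclideanSpace ℝ (Fin 3) → ℝ) (x : EuclideanSpace ℝ (Fin 3)) : ℝ :=
  ∑ i : Fin 3,
    iteratedDeriv 2 (fun r : ℝ => φ (x + r • EuclideanSpace.single i (1 : ℝ))) 0

open Set Filter Topology

lemma iteratedDeriv2_eq (f : ℝ → ℝ) (x : ℝ) :
    iteratedDeriv 2 f x = deriv (deriv f) x := by
  rw [show (2 : ℕ) = 1 + 1 from rfl, iteratedDeriv_succ, iteratedDeriv_one]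

/-- Second derivative test at a global maximum. -/
lemma secondDerivTest {f : ℝ → ℝ} (hf : ContDiff ℝ 2 f) (hmax : ∀ r, f r ≤ f 0) :
    iteratedDeriv 2 f 0 ≤ 0 := by
  by_contra h
  push_neg at h
  rw [iteratedDeriv2_eq] at h
  have hd1 : Differentiable ℝ f := hf.differentiable (by norm_num)
  have hd2 : Differentiable ℝ (deriv f) := by
    have := hf.differentiable_iteratedDeriv 1 (by norm_num)
    rwa [iteratedDeriv_one] at this
  have hf'0 : deriv f 0 = 0 :=
    IsLocalMax.deriv_eq_zero (Filter.Eventually.of_forall hmax)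
  have hder : HasDerivAt (deriv f) (deriv (deriv f) 0) 0 := (hd2 0).hasDerivAt
  rw [hasDerivAt_iff_tendsto_slope] at hder
  have htend : Tendsto (slope (deriv f) 0) (𝓝[>] 0) (𝓝 (deriv (deriv f) 0)) :=
    hder.mono_left (nhdsWithin_mono 0 (fun x hx => hx.ne'))
  have h2 : ∀ᶠ x in 𝓝[>] (0 : ℝ), 0 < slope (deriv f) 0 x :=
    htend.eventually (eventually_gt_nhds h)
  obtain ⟨δ, hδ, hsub⟩ := mem_nhdsGT_iff_exists_Ioo_subset.mp h2
  have hδ0 : (0 : ℝ) < δ := hδ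
  have hpos : ∀ x ∈ Ioo (0 : ℝ) δ, 0 < deriv f x := by
    intro x hx
    have hs := hsub hx
    rw [Set.mem_setOf_eq, slope_def_field, hf'0, sub_zero, sub_zero] at hs
    have hx0 : 0 < x := hx.1
    have := mul_pos hs hx0
    rwa [div_mul_cancel₀ _ hx0.ne'] at this
  have hmono : StrictMonoOn f (Icc 0 δ) := by
    apply strictMonoOn_of_deriv_pos (convex_Icc _ _) hd1.continuous.continuousOn
    intro x hx
    rw [interior_Icc] at hx
    exact hpos x hx
  have hlt : f 0 < f (δ / 2) :=
    hmono ⟨le_rfl, hδ0.le⟩ ⟨by linarith, by linarith⟩ (by linarith)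
  exact absurd (hmax (δ / 2)) (not_le.mpr hlt)

lemma deriv2_sub_poly (F : ℝ → ℝ) (hF : ContDiff ℝ 2 F) (c₀ c₁ c₂ : ℝ) :
    iteratedDeriv 2 (fun r => F r - (c₀ + c₁ * r + c₂ * (r * r))) 0
      = iteratedDeriv 2 F 0 - 2 * c₂ := by
  have hd1 : Differentiable ℝ F := hF.differentiable (by norm_num)
  have hd2 : Differentiable ℝ (deriv F) := by
    have := hF.differentiable_iteratedDeriv 1 (by norm_num)
    rwa [iteratedDeriv_one] at this
  have hP : ∀ r : ℝ, HasDerivAt (fun r => c₀ + c₁ * r + c₂ * (r * r)) (c₁ + c₂ * (2 * r)) r := by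
    intro r
    have h1 : HasDerivAt (fun r : ℝ => c₁ * r) (c₁ * 1) r := (hasDerivAt_id r).const_mul c₁
    have h2 : HasDerivAt (fun r : ℝ => r * r) (1 * r + r * 1) r :=
      (hasDerivAt_id r).mul (hasDerivAt_id r)
    have h3 := ((hasDerivAt_const r c₀).fun_add h1).fun_add (h2.const_mul c₂)
    exact h3.congr_deriv (by ring)
  have hstep : deriv (fun r => F r - (c₀ + c₁ * r + c₂ * (r * r)))
      = fun r => deriv F r - (c₁ + c₂ * (2 * r)) := by
    funext r
    rw [deriv_fun_sub (hd1 r) (hP r).differentiableAt, (hP r).deriv]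
  have hQ : HasDerivAt (fun r : ℝ => c₁ + c₂ * (2 * r)) (c₂ * 2) 0 := by
    have h4 := (hasDerivAt_const (0 : ℝ) c₁).fun_add
      (((hasDerivAt_id (0 : ℝ)).const_mul 2).const_mul c₂)
    exact h4.congr_deriv (by ring)
  rw [iteratedDeriv2_eq, iteratedDeriv2_eq, hstep,
    deriv_fun_sub (hd2 0) hQ.differentiableAt, hQ.deriv]
  ring

/-- One-sided maximum principle estimate. -/
lemma key_est (β : ℝ) (hβ : 0 < β) (V φ g : EuclideanSpace ℝ (Fin 3) → ℝ)
    (hVl : ∀ x, β ≤ V x) (hφ : ContDiff ℝ 2 φ) (M : ℝ) (hM : ∀ x, |φ x| ≤ M)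
    (G : ℝ) (hG0 : 0 ≤ G) (hg : ∀ x, |g x| ≤ G)
    (heq : ∀ x, lap φ x - V x * φ x = g x) (x₀ : EuclideanSpace ℝ (Fin 3)) :
    φ x₀ ≤ β⁻¹ * G := by
  have hM0 : 0 ≤ M := le_trans (abs_nonneg _) (hM x₀)
  have hβi : 0 < β⁻¹ := inv_pos.mpr hβ
  refine le_of_forall_pos_le_add fun ε' hε' => ?_
  set ε := ε' * β / 6 with hεdef
  have hε : 0 < ε := by positivity
  have hcalc : β⁻¹ * (G + 6 * ε) = β⁻¹ * G + ε' := by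
    rw [hεdef]; field_simp
  suffices h : φ x₀ ≤ β⁻¹ * (G + 6 * ε) by linarith [hcalc ▸ h]
  set ψ : EuclideanSpace ℝ (Fin 3) → ℝ := fun x => φ x - ε * ‖x - x₀‖ ^ 2 with hψ
  have hψc : Continuous ψ :=
    hφ.continuous.sub (continuous_const.mul ((continuous_id.sub continuous_const).norm.pow 2))
  set R := Real.sqrt ((2 * M + 1) / ε) with hRdef
  have hR0 : 0 ≤ R := Real.sqrt_nonneg _
  have hx₀mem : x₀ ∈ Metric.closedBall x₀ R := Metric.mem_closedBall_self hR0
  obtain ⟨z, hzmem, hzmax⟩ :=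
    (isCompact_closedBall x₀ R).exists_isMaxOn ⟨x₀, hx₀mem⟩ hψc.continuousOn
  have hψx₀ : ψ x₀ = φ x₀ := by simp [hψ]
  have hglobal : ∀ y, ψ y ≤ ψ z := by
    intro y
    by_cases hy : y ∈ Metric.closedBall x₀ R
    · exact hzmax hy
    · have h1 : R < ‖y - x₀‖ := by
        simpa [Metric.mem_closedBall, dist_eq_norm, not_le] using hy
      have hR2 : ε * R ^ 2 = 2 * M + 1 := by
        rw [hRdef, Real.sq_sqrt (by positivity)]
        field_simp
      have h2 : 2 * M + 1 ≤ ε * ‖y - x₀‖ ^ 2 := by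
        have h3 : R ^ 2 ≤ ‖y - x₀‖ ^ 2 := by nlinarith
        rw [← hR2]
        exact mul_le_mul_of_nonneg_left h3 hε.le
      have habs := abs_le.mp (hM y)
      have habs0 := abs_le.mp (hM x₀)
      have hy1 : ψ y ≤ ψ x₀ := by
        simp only [hψ]
        simp only [sub_self, norm_zero]
        nlinarith
      exact hy1.trans (hzmax hx₀mem)
  -- laplacian bound at the max point z
  have hlap : ∀ i : Fin 3,
      iteratedDeriv 2 (fun r : ℝ => φ (z + r • EuclideanSpace.single i (1 : ℝ))) 0 ≤ 2 * ε := by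
    intro i
    set e := EuclideanSpace.single i (1 : ℝ) with he_def
    have he : ‖e‖ = 1 := by rw [he_def, EuclideanSpace.norm_single]; norm_num
    set F : ℝ → ℝ := fun r => φ (z + r • e) with hFdef
    have hF : ContDiff ℝ 2 F :=
      hφ.comp (contDiff_const.add (contDiff_id.smul contDiff_const))
    set a : ℝ := ‖z - x₀‖ ^ 2 with hadef
    set b : ℝ := 2 * (inner ℝ (z - x₀) e : ℝ) with hbdef
    have hline : (fun r : ℝ => ψ (z + r • e))
        = fun r => F r - (ε * a + (ε * b) * r + ε * (r * r)) := by
      funext r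
      have h1 : z + r • e - x₀ = (z - x₀) + r • e := by abel
      simp only [hψ, hFdef]
      rw [h1, norm_add_sq_real, real_inner_smul_right, norm_smul]
      simp only [he, mul_one, mul_pow, Real.norm_eq_abs, sq_abs, hadef, hbdef]
      ring
    have hC : ContDiff ℝ 2 (fun r : ℝ => ψ (z + r • e)) := by
      rw [hline]
      exact hF.sub ((contDiff_const.add (contDiff_const.mul contDiff_id)).add
        (contDiff_const.mul (contDiff_id.mul contDiff_id)))
    have hmax0 : ∀ r : ℝ, (fun r : ℝ => ψ (z + r • e)) r ≤ (fun r : ℝ => ψ (z + r • e)) 0 := by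
      intro r
      simp only [zero_smul, add_zero]
      exact hglobal _
    have htest := secondDerivTest hC hmax0
    rw [hline, deriv2_sub_poly F hF (ε * a) (ε * b) ε] at htest
    linarith
  have hlapφ : lap φ z ≤ 6 * ε := by
    have hsum : lap φ z ≤ ∑ _i : Fin 3, 2 * ε := Finset.sum_le_sum fun i _ => hlap i
    have h7 : (∑ _i : Fin 3, 2 * ε) = 6 * ε := by
      simp [Finset.sum_const, Finset.card_univ]
      ring
    linarith
  have hgz := heq z
  have hgb := abs_le.mp (hg z)
  have hVφ : V z * φ z ≤ G + 6 * ε := by linarith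
  rcases le_or_gt 0 (φ z) with hsign | hsign
  · have hb : β * φ z ≤ V z * φ z := mul_le_mul_of_nonneg_right (hVl z) hsign
    have hzle : φ z ≤ β⁻¹ * (G + 6 * ε) := by
      have h5 : β⁻¹ * (β * φ z) ≤ β⁻¹ * (G + 6 * ε) :=
        mul_le_mul_of_nonneg_left (by linarith) hβi.le
      rwa [← mul_assoc, inv_mul_cancel₀ hβ.ne', one_mul] at h5
    have hch : φ x₀ ≤ φ z := by
      have h6 : ψ z ≤ φ z := by
        simp only [hψ]
        nlinarith [sq_nonneg ‖z - x₀‖, norm_nonneg (z - x₀)]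
      have := hglobal x₀
      rw [hψx₀] at this
      linarith
    linarith
  · have hch : φ x₀ ≤ φ z := by
      have h6 : ψ z ≤ φ z := by
        simp only [hψ]
        nlinarith [sq_nonneg ‖z - x₀‖]
      have := hglobal x₀
      rw [hψx₀] at this
      linarith
    nlinarith

theorem stmt9 (β B : ℝ) (hβ : 0 < β) (hβB : β ≤ B)
    (V : EuclideanSpace ℝ (Fin 3) → ℝ) (hV : Continuous V)
    (hVl : ∀ x, β ≤ V x) (hVu : ∀ x, V x ≤ B) :
    (∀ φ g : EuclideanSpace ℝ (Fin 3) → ℝ, ContDiff ℝ 2 φ →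
      (∃ M : ℝ, ∀ x, |φ x| ≤ M) → Continuous g → (∃ M : ℝ, ∀ x, |g x| ≤ M) →
      (∀ x, lap φ x - V x * φ x = g x) →
      ∀ x, |φ x| ≤ β⁻¹ * ⨆ y, |g y|) ∧
    (∀ φ : EuclideanSpace ℝ (Fin 3) → ℝ, ContDiff ℝ 2 φ →
      (∃ M : ℝ, ∀ x, |φ x| ≤ M) →
      (∀ x, lap φ x = V x * φ x) → ∀ x, φ x = 0) := by
  have hlapneg : ∀ (φ : EuclideanSpace ℝ (Fin 3) → ℝ) (x : EuclideanSpace ℝ (Fin 3)),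
      lap (fun y => -φ y) x = -lap φ x := by
    intro φ x
    unfold lap
    rw [← Finset.sum_neg_distrib]
    exact Finset.sum_congr rfl fun i _ => iteratedDeriv_neg 2 _ 0
  constructor
  · rintro φ g hφ ⟨M, hM⟩ hgc ⟨Mg, hMg⟩ heq x
    set S := ⨆ y, |g y| with hSdef
    have hbdd : BddAbove (Set.range fun y => |g y|) := ⟨Mg, by rintro _ ⟨y, rfl⟩; exact hMg y⟩
    have hS : ∀ y, |g y| ≤ S := fun y => le_ciSup hbdd y
    have hS0 : 0 ≤ S := le_trans (abs_nonneg _) (hS x)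
    have h1 := key_est β hβ V φ g hVl hφ M hM S hS0 hS heq x
    have h2 := key_est β hβ V (fun y => -φ y) (fun y => -g y) hVl hφ.neg M
      (fun y => by simpa using hM y) S hS0 (fun y => by simpa using hS y)
      (fun y => by
        show lap (fun t => -φ t) y - V y * (-φ y) = -(g y)
        rw [hlapneg]; have := heq y; linarith) x
    have h2' : -φ x ≤ β⁻¹ * S := h2
    rw [abs_le]
    constructor <;> linarith
  · rintro φ hφ ⟨M, hM⟩ heq x
    have heq' : ∀ y, lap φ y - V y * φ y = (fun _ => (0 : ℝ)) y := fun y => by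
      rw [heq y]; ring
    have h0 : ∀ y : EuclideanSpace ℝ (Fin 3), |(fun _ : EuclideanSpace ℝ (Fin 3) => (0 : ℝ)) y| ≤ (0 : ℝ) := by simp
    have h1 := key_est β hβ V φ (fun _ : EuclideanSpace ℝ (Fin 3) => (0 : ℝ)) hVl hφ M hM 0 le_rfl h0 heq' x
    have h2 := key_est β hβ V (fun y => -φ y) (fun _ : EuclideanSpace ℝ (Fin 3) => (0 : ℝ)) hVl hφ.neg M
      (fun y => by simpa using hM y) 0 le_rfl h0
      (fun y => by
        show lap (fun t => -φ t) y - V y * (-φ y) = (0 : ℝ)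
        rw [hlapneg]; have := heq' y; simp only at this; linarith) x
    have h2' : -φ x ≤ β⁻¹ * 0 := h2
    simp only [mul_zero] at h1 h2'
    linarith
end
end

section
/- For every τ ∈ (0,1), setting ε := 1 − √(1 − τ²), there exists a unique C² function ρ : ℝ → ℝ satisfying the ODE ρ''(x) − (1/ρ(x))(1 + ρ'(x)²) + (1 + ρ'(x)²)^{3/2} = 0 for all x ∈ ℝ, with ρ(0) = ε and ρ'(0) = 0; moreover this solution is periodic, i.e. there exists T > 0 with ρ(x + T) = ρ(x) for all x, and it satisfies ε ≤ ρ(x) ≤ 2 − ε for all x ∈ ℝ. -/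
noncomputable section

open Real

namespace DelaunayAux

def RR (b θ : ℝ) : ℝ := 1 + b * Real.cos θ
def DD (b θ : ℝ) : ℝ := 1 + b * Real.cos θ - b ^ 2 / 2 * Real.sin θ ^ 2
def QQ (b θ : ℝ) : ℝ := 1 + b * Real.cos θ - b ^ 2 / 4 * Real.sin θ ^ 2
def Om (b θ : ℝ) : ℝ := Real.sqrt (QQ b θ) / DD b θ
def UU (b θ : ℝ) : ℝ := -(b * Real.sin θ) * Om b θ

variable {b : ℝ}

lemma RR_lb (hb0 : 0 < b) (θ : ℝ) : 1 - b ≤ RR b θ := by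
  unfold RR
  nlinarith [Real.neg_one_le_cos θ]

lemma RR_ub (hb0 : 0 < b) (θ : ℝ) : RR b θ ≤ 1 + b := by
  unfold RR
  nlinarith [Real.cos_le_one θ]

lemma RR_pos (hb0 : 0 < b) (hb1 : b < 1) (θ : ℝ) : 0 < RR b θ :=
  lt_of_lt_of_le (by linarith) (RR_lb hb0 θ)

lemma DD_lb (hb0 : 0 < b) (hb1 : b < 1) (θ : ℝ) : 1 - b ≤ DD b θ := by
  have h1 : (0:ℝ) ≤ 1 + Real.cos θ := by linarith [Real.neg_one_le_cos θ]
  have h2 : (0:ℝ) ≤ 1 - Real.cos θ := by linarith [Real.cos_le_one θ]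
  have h3 : Real.sin θ ^ 2 = (1 - Real.cos θ) * (1 + Real.cos θ) := by
    nlinarith [Real.sin_sq_add_cos_sq θ]
  unfold DD
  rw [h3]
  nlinarith [mul_nonneg (mul_nonneg hb0.le h1) (by nlinarith : (0:ℝ) ≤ 2 - b * (1 - Real.cos θ))]

lemma DD_pos (hb0 : 0 < b) (hb1 : b < 1) (θ : ℝ) : 0 < DD b θ :=
  lt_of_lt_of_le (by linarith) (DD_lb hb0 hb1 θ)

lemma DD_ub (hb0 : 0 < b) (θ : ℝ) : DD b θ ≤ 1 + b := by
  unfold DD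
  nlinarith [Real.cos_le_one θ, sq_nonneg (Real.sin θ), sq_nonneg b]

lemma QQ_lb (hb0 : 0 < b) (hb1 : b < 1) (θ : ℝ) : 1 - b ≤ QQ b θ := by
  have := DD_lb hb0 hb1 θ
  unfold QQ
  unfold DD at this
  nlinarith [sq_nonneg (Real.sin θ), sq_nonneg b]

lemma QQ_pos (hb0 : 0 < b) (hb1 : b < 1) (θ : ℝ) : 0 < QQ b θ :=
  lt_of_lt_of_le (by linarith) (QQ_lb hb0 hb1 θ)

lemma QQ_ub (hb0 : 0 < b) (θ : ℝ) : QQ b θ ≤ 1 + b := by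
  unfold QQ
  nlinarith [Real.cos_le_one θ, sq_nonneg (Real.sin θ), sq_nonneg b]

lemma sqrtQQ_pos (hb0 : 0 < b) (hb1 : b < 1) (θ : ℝ) : 0 < Real.sqrt (QQ b θ) :=
  Real.sqrt_pos.mpr (QQ_pos hb0 hb1 θ)

lemma Om_pos (hb0 : 0 < b) (hb1 : b < 1) (θ : ℝ) : 0 < Om b θ :=
  div_pos (sqrtQQ_pos hb0 hb1 θ) (DD_pos hb0 hb1 θ)

lemma Om_lb (hb0 : 0 < b) (hb1 : b < 1) (θ : ℝ) :
    Real.sqrt (1 - b) / (1 + b) ≤ Om b θ := by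
  unfold Om
  apply div_le_div₀ (Real.sqrt_nonneg _) (Real.sqrt_le_sqrt (QQ_lb hb0 hb1 θ))
    (DD_pos hb0 hb1 θ) (DD_ub hb0 θ)

lemma Om_ub (hb0 : 0 < b) (hb1 : b < 1) (θ : ℝ) :
    Om b θ ≤ Real.sqrt (1 + b) / (1 - b) := by
  unfold Om
  apply div_le_div₀ (Real.sqrt_nonneg _) (Real.sqrt_le_sqrt (QQ_ub hb0 θ))
    (by linarith) (DD_lb hb0 hb1 θ)



lemma hasDerivAt_RR (θ : ℝ) : HasDerivAt (RR b) (-(b * Real.sin θ)) θ := by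
  unfold RR
  simpa using ((Real.hasDerivAt_cos θ).const_mul b).const_add 1

lemma hasDerivAt_sinsq (θ : ℝ) :
    HasDerivAt (fun t => Real.sin t ^ 2) (2 * Real.sin θ * Real.cos θ) θ := by
  have h : HasDerivAt (fun t => Real.sin t ^ 2) ((2:ℕ) * Real.sin θ ^ (2 - 1) * Real.cos θ) θ :=
    (Real.hasDerivAt_sin θ).pow 2
  convert h using 1
  norm_num

lemma hasDerivAt_DD (θ : ℝ) :
    HasDerivAt (DD b) (-(b * Real.sin θ) - b ^ 2 * Real.sin θ * Real.cos θ) θ := by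
  unfold DD
  have h : HasDerivAt (fun t => 1 + b * Real.cos t - b ^ 2 / 2 * Real.sin t ^ 2)
      (-(b * Real.sin θ) - b ^ 2 / 2 * (2 * Real.sin θ * Real.cos θ)) θ :=
    (hasDerivAt_RR (b := b) θ).sub ((hasDerivAt_sinsq θ).const_mul (b ^ 2 / 2))
  convert h using 1
  ring

lemma hasDerivAt_QQ (θ : ℝ) :
    HasDerivAt (QQ b) (-(b * Real.sin θ) - b ^ 2 / 2 * Real.sin θ * Real.cos θ) θ := by
  unfold QQ
  have h : HasDerivAt (fun t => 1 + b * Real.cos t - b ^ 2 / 4 * Real.sin t ^ 2)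
      (-(b * Real.sin θ) - b ^ 2 / 4 * (2 * Real.sin θ * Real.cos θ)) θ :=
    (hasDerivAt_RR (b := b) θ).sub ((hasDerivAt_sinsq θ).const_mul (b ^ 2 / 4))
  convert h using 1
  ring

lemma hasDerivAt_sqrtQQ (hb0 : 0 < b) (hb1 : b < 1) (θ : ℝ) :
    HasDerivAt (fun t => Real.sqrt (QQ b t))
      ((-(b * Real.sin θ) - b ^ 2 / 2 * Real.sin θ * Real.cos θ) / (2 * Real.sqrt (QQ b θ))) θ :=
  (hasDerivAt_QQ θ).sqrt (QQ_pos hb0 hb1 θ).ne'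

lemma hasDerivAt_Om (hb0 : 0 < b) (hb1 : b < 1) (θ : ℝ) :
    HasDerivAt (Om b)
      (((-(b * Real.sin θ) - b ^ 2 / 2 * Real.sin θ * Real.cos θ) / (2 * Real.sqrt (QQ b θ)) *
          DD b θ - Real.sqrt (QQ b θ) * (-(b * Real.sin θ) - b ^ 2 * Real.sin θ * Real.cos θ)) /
        DD b θ ^ 2) θ := by
  have h := (hasDerivAt_sqrtQQ hb0 hb1 θ).div (hasDerivAt_DD (b := b) θ) (DD_pos hb0 hb1 θ).ne'
  exact h

def OmD (b θ : ℝ) : ℝ :=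
  Real.sqrt (QQ b θ) *
    (((-(b * Real.sin θ) - b ^ 2 / 2 * Real.sin θ * Real.cos θ) * DD b θ / (2 * QQ b θ) -
      (-(b * Real.sin θ) - b ^ 2 * Real.sin θ * Real.cos θ)) / DD b θ ^ 2)

lemma hasDerivAt_Om2 (hb0 : 0 < b) (hb1 : b < 1) (θ : ℝ) :
    HasDerivAt (Om b) (OmD b θ) θ := by
  have h := hasDerivAt_Om hb0 hb1 θ
  convert h using 1
  unfold OmD
  have hq : Real.sqrt (QQ b θ) ^ 2 = QQ b θ := Real.sq_sqrt (QQ_pos hb0 hb1 θ).le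
  set sq := Real.sqrt (QQ b θ) with hsqdef
  have hsqne : sq ≠ 0 := (sqrtQQ_pos hb0 hb1 θ).ne'
  have hdne : DD b θ ≠ 0 := (DD_pos hb0 hb1 θ).ne'
  rw [← hq]
  field_simp

lemma hasDerivAt_UU (hb0 : 0 < b) (hb1 : b < 1) (θ : ℝ) :
    HasDerivAt (UU b) (-(b * Real.cos θ) * Om b θ + -(b * Real.sin θ) * OmD b θ) θ := by
  unfold UU
  have h1 : HasDerivAt (fun t => -(b * Real.sin t)) (-(b * Real.cos θ)) θ := by
    exact ((Real.hasDerivAt_sin θ).const_mul b).neg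
  exact h1.mul (hasDerivAt_Om2 hb0 hb1 θ)

lemma poly_key (b s c d q r : ℝ) (hd : d ≠ 0) (hq : q ≠ 0)
    (h1 : r = 1 + b * c) (h2 : d = 1 + b * c - b ^ 2 / 2 * s ^ 2)
    (h3 : q = 1 + b * c - b ^ 2 / 4 * s ^ 2) :
    q * (-(b * c) / d ^ 2 + -(b * s) *
      (((-(b * s) - b ^ 2 / 2 * s * c) * d / (2 * q) - (-(b * s) - b ^ 2 * s * c)) / d ^ 3)) =
    r / d ^ 2 - r ^ 3 / d ^ 3 := by
  field_simp
  subst h1 h2 h3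
  ring

lemma poly_one_add (b s c d q r : ℝ) (hd : d ≠ 0)
    (h1 : r = 1 + b * c) (h2 : d = 1 + b * c - b ^ 2 / 2 * s ^ 2)
    (h3 : q = 1 + b * c - b ^ 2 / 4 * s ^ 2) :
    1 + b ^ 2 * s ^ 2 * q / d ^ 2 = (r / d) ^ 2 := by
  field_simp
  subst h1 h2 h3
  ring

lemma key_identity (hb0 : 0 < b) (hb1 : b < 1) (θ : ℝ) :
    (-(b * Real.cos θ) * Om b θ + -(b * Real.sin θ) * OmD b θ) * Om b θ =
      RR b θ / DD b θ ^ 2 - RR b θ ^ 3 / DD b θ ^ 3 := by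
  have hq : Real.sqrt (QQ b θ) ^ 2 = QQ b θ := Real.sq_sqrt (QQ_pos hb0 hb1 θ).le
  have hqpos := QQ_pos hb0 hb1 θ
  have hdpos := DD_pos hb0 hb1 θ
  unfold Om OmD
  set sq := Real.sqrt (QQ b θ) with hsqdef
  have hsqne : sq ≠ 0 := (sqrtQQ_pos hb0 hb1 θ).ne'
  have hdne : DD b θ ≠ 0 := hdpos.ne'
  have hqne : QQ b θ ≠ 0 := hqpos.ne'
  have expand : (-(b * Real.cos θ) * (sq / DD b θ) + -(b * Real.sin θ) *
      (sq * (((-(b * Real.sin θ) - b ^ 2 / 2 * Real.sin θ * Real.cos θ) * DD b θ / (2 * QQ b θ) -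
        (-(b * Real.sin θ) - b ^ 2 * Real.sin θ * Real.cos θ)) / DD b θ ^ 2))) * (sq / DD b θ)
      = sq ^ 2 * (-(b * Real.cos θ) / DD b θ ^ 2 + -(b * Real.sin θ) *
          (((-(b * Real.sin θ) - b ^ 2 / 2 * Real.sin θ * Real.cos θ) * DD b θ / (2 * QQ b θ) -
            (-(b * Real.sin θ) - b ^ 2 * Real.sin θ * Real.cos θ)) / DD b θ ^ 3)) := by
    field_simp
  rw [expand, hq]
  exact poly_key b (Real.sin θ) (Real.cos θ) (DD b θ) (QQ b θ) (RR b θ) hdne hqne rfl rfl rfl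

lemma one_add_UU_sq (hb0 : 0 < b) (hb1 : b < 1) (θ : ℝ) :
    1 + UU b θ ^ 2 = (RR b θ / DD b θ) ^ 2 := by
  have hq : Real.sqrt (QQ b θ) ^ 2 = QQ b θ := Real.sq_sqrt (QQ_pos hb0 hb1 θ).le
  unfold UU Om
  have hdne : DD b θ ≠ 0 := (DD_pos hb0 hb1 θ).ne'
  have expand : 1 + (-(b * Real.sin θ) * (Real.sqrt (QQ b θ) / DD b θ)) ^ 2
      = 1 + b ^ 2 * Real.sin θ ^ 2 * Real.sqrt (QQ b θ) ^ 2 / DD b θ ^ 2 := by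
    field_simp
  rw [expand, hq]
  exact poly_one_add b (Real.sin θ) (Real.cos θ) (DD b θ) (QQ b θ) (RR b θ) hdne rfl rfl rfl

lemma continuous_QQ : Continuous (QQ b) := by unfold QQ; fun_prop

lemma continuous_DD : Continuous (DD b) := by unfold DD; fun_prop

lemma continuous_Om (hb0 : 0 < b) (hb1 : b < 1) : Continuous (Om b) := by
  unfold Om
  exact (continuous_QQ.sqrt).div continuous_DD fun θ => (DD_pos hb0 hb1 θ).ne'

lemma continuous_OmInv (hb0 : 0 < b) (hb1 : b < 1) : Continuous fun θ => (Om b θ)⁻¹ :=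
  (continuous_Om hb0 hb1).inv₀ fun θ => (Om_pos hb0 hb1 θ).ne'

def GG (b : ℝ) : ℝ → ℝ := fun θ => ∫ ψ in (π : ℝ)..θ, (Om b ψ)⁻¹

lemma hasDerivAt_GG (hb0 : 0 < b) (hb1 : b < 1) (θ : ℝ) :
    HasDerivAt (GG b) (Om b θ)⁻¹ θ := by
  apply intervalIntegral.integral_hasDerivAt_right
    ((continuous_OmInv hb0 hb1).intervalIntegrable _ _)
    ((continuous_OmInv hb0 hb1).stronglyMeasurableAtFilter _ _)
    (continuous_OmInv hb0 hb1).continuousAt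

lemma deriv_GG (hb0 : 0 < b) (hb1 : b < 1) (θ : ℝ) :
    deriv (GG b) θ = (Om b θ)⁻¹ := (hasDerivAt_GG hb0 hb1 θ).deriv

lemma strictMono_GG (hb0 : 0 < b) (hb1 : b < 1) : StrictMono (GG b) := by
  apply strictMono_of_deriv_pos
  intro θ
  rw [deriv_GG hb0 hb1 θ]
  exact inv_pos.mpr (Om_pos hb0 hb1 θ)

lemma OmInv_lb (hb0 : 0 < b) (hb1 : b < 1) (θ : ℝ) :
    (Real.sqrt (1 + b) / (1 - b))⁻¹ ≤ (Om b θ)⁻¹ :=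
  inv_anti₀ (Om_pos hb0 hb1 θ) (Om_ub hb0 hb1 θ)

lemma mI_pos (hb0 : 0 < b) (hb1 : b < 1) : 0 < (Real.sqrt (1 + b) / (1 - b))⁻¹ := by
  have h1 : (0:ℝ) < Real.sqrt (1 + b) := Real.sqrt_pos.mpr (by linarith)
  have h2 : (0:ℝ) < 1 - b := by linarith
  positivity

lemma GG_growth (hb0 : 0 < b) (hb1 : b < 1) :
    ∀ ⦃x y : ℝ⦄, x ≤ y → (Real.sqrt (1 + b) / (1 - b))⁻¹ * (y - x) ≤ GG b y - GG b x := by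
  apply mul_sub_le_image_sub_of_le_deriv
  · exact fun θ => (hasDerivAt_GG hb0 hb1 θ).differentiableAt
  · intro θ
    rw [deriv_GG hb0 hb1 θ]
    exact OmInv_lb hb0 hb1 θ

lemma GG_pi (b : ℝ) : GG b π = 0 := intervalIntegral.integral_same

lemma tendsto_GG_atTop (hb0 : 0 < b) (hb1 : b < 1) :
    Filter.Tendsto (GG b) Filter.atTop Filter.atTop := by
  set m := (Real.sqrt (1 + b) / (1 - b))⁻¹ with hm
  have hmpos := mI_pos hb0 hb1
  apply Filter.tendsto_atTop_mono' Filter.atTop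
    (show ∀ᶠ y in Filter.atTop, m * (y - π) ≤ GG b y by
      filter_upwards [Filter.eventually_ge_atTop π] with y hy
      have := GG_growth hb0 hb1 hy
      rw [GG_pi] at this
      linarith)
  have h1 : Filter.Tendsto (fun y : ℝ => y - π) Filter.atTop Filter.atTop :=
    Filter.tendsto_atTop_add_const_right _ (-π) Filter.tendsto_id
  exact h1.const_mul_atTop hmpos

lemma tendsto_GG_atBot (hb0 : 0 < b) (hb1 : b < 1) :
    Filter.Tendsto (GG b) Filter.atBot Filter.atBot := by
  set m := (Real.sqrt (1 + b) / (1 - b))⁻¹ with hm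
  have hmpos := mI_pos hb0 hb1
  apply Filter.tendsto_atBot_mono' Filter.atBot
    (show ∀ᶠ y in Filter.atBot, GG b y ≤ m * (y - π) by
      filter_upwards [Filter.eventually_le_atBot π] with y hy
      have := GG_growth hb0 hb1 hy
      rw [GG_pi] at this
      nlinarith)
  have h1 : Filter.Tendsto (fun y : ℝ => y - π) Filter.atBot Filter.atBot :=
    Filter.tendsto_atBot_add_const_right _ (-π) Filter.tendsto_id
  exact h1.const_mul_atBot hmpos

lemma continuous_GG (hb0 : 0 < b) (hb1 : b < 1) : Continuous (GG b) :=
  continuous_iff_continuousAt.mpr fun θ => (hasDerivAt_GG hb0 hb1 θ).continuousAt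

lemma surjective_GG (hb0 : 0 < b) (hb1 : b < 1) : Function.Surjective (GG b) :=
  Continuous.surjective (continuous_GG hb0 hb1) (tendsto_GG_atTop hb0 hb1)
    (tendsto_GG_atBot hb0 hb1)

lemma Om_periodic (b : ℝ) : Function.Periodic (fun θ => (Om b θ)⁻¹) (2 * π) := by
  intro θ
  simp only [Om, QQ, DD, Real.cos_add_two_pi, Real.sin_add_two_pi]

lemma GG_add (hb0 : 0 < b) (hb1 : b < 1) (a : ℝ) :
    GG b (a + 2 * π) = GG b a + GG b (3 * π) := by
  have hint : ∀ u v : ℝ, IntervalIntegrable (fun θ => (Om b θ)⁻¹) MeasureTheory.volume u v :=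
    fun u v => (continuous_OmInv hb0 hb1).intervalIntegrable u v
  have h1 : GG b a + ∫ ψ in a..(a + 2 * π), (Om b ψ)⁻¹ = GG b (a + 2 * π) :=
    intervalIntegral.integral_add_adjacent_intervals (hint _ _) (hint _ _)
  have h2 : ∫ ψ in a..(a + 2 * π), (Om b ψ)⁻¹ = ∫ ψ in π..(π + 2 * π), (Om b ψ)⁻¹ :=
    (Om_periodic b).intervalIntegral_add_eq a π
  have h3 : GG b (3 * π) = ∫ ψ in π..(π + 2 * π), (Om b ψ)⁻¹ := by
    unfold GG
    norm_num
    ring_nf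
  rw [h2, ← h3] at h1
  linarith

lemma TT_pos (hb0 : 0 < b) (hb1 : b < 1) : 0 < GG b (3 * π) := by
  have h := strictMono_GG hb0 hb1 (show π < 3 * π by nlinarith [Real.pi_pos])
  rwa [GG_pi] at h

lemma rpow_three_halves {x : ℝ} (hx : 0 < x) : x ^ ((3:ℝ)/2) = x * Real.sqrt x := by
  rw [show ((3:ℝ)/2) = 1 + 1/2 by norm_num, Real.rpow_add hx, Real.rpow_one,
    ← Real.sqrt_eq_rpow]

lemma sq_rpow_three_halves {x : ℝ} (hx : 0 ≤ x) : (x ^ 2 : ℝ) ^ ((3:ℝ)/2) = x ^ 3 := by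
  rw [← Real.rpow_natCast x 2, ← Real.rpow_mul hx]
  have h3 : (((2:ℕ):ℝ) * ((3:ℝ)/2)) = ((3:ℕ) : ℝ) := by push_cast; norm_num
  rw [h3, Real.rpow_natCast]

/-- The Delaunay vector field. -/
def VF : ℝ × ℝ → ℝ × ℝ :=
  fun p => (p.2, (1 + p.2 ^ 2) / p.1 - (1 + p.2 ^ 2) * Real.sqrt (1 + p.2 ^ 2))

lemma contDiffAt_VF {p : ℝ × ℝ} (hp : p.1 ≠ 0) : ContDiffAt ℝ 1 VF p := by
  have h2 : ContDiff ℝ 1 (fun q : ℝ × ℝ => 1 + q.2 ^ 2) :=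
    contDiff_const.add (contDiff_snd.pow 2)
  have hpos : (fun q : ℝ × ℝ => 1 + q.2 ^ 2) p ≠ 0 := by positivity
  apply ContDiffAt.prodMk
  · exact contDiff_snd.contDiffAt
  · exact ((h2.contDiffAt.div contDiff_fst.contDiffAt hp).sub
      (h2.contDiffAt.mul (h2.contDiffAt.sqrt hpos)))

lemma continuous_VF_of (g : ℝ → ℝ) (hg : Continuous g) (hg' : Continuous (deriv g)) :
    Continuous fun t => (g t, deriv g t) := hg.prodMk hg'

section Generic

variable {g : ℝ → ℝ}

lemma sol_facts (hg : ContDiff ℝ 2 g) :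
    Differentiable ℝ g ∧ Differentiable ℝ (deriv g) ∧ Continuous (deriv (deriv g)) := by
  have h2 : ContDiff ℝ ((1 : WithTop ℕ∞) + 1) g := hg
  rw [contDiff_succ_iff_deriv] at h2
  obtain ⟨hdiff, -, h1⟩ := h2
  rw [contDiff_one_iff_deriv] at h1
  exact ⟨hdiff, h1.1, h1.2⟩

lemma sol_ne_zero (hg : ContDiff ℝ 2 g)
    (hode : ∀ x : ℝ, deriv (deriv g) x - (1 / g x) * (1 + (deriv g x) ^ 2) +
      (1 + (deriv g x) ^ 2) ^ ((3 : ℝ) / 2) = 0) :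
    ∀ x : ℝ, g x ≠ 0 := by
  obtain ⟨hdiff, hdiff', hcont''⟩ := sol_facts hg
  intro x₀ hx₀
  by_cases hx : x₀ ∈ closure {x : ℝ | g x ≠ 0}
  · -- limit of points where g ≠ 0; use continuity of h * g - (1 + u^2)
    set φ : ℝ → ℝ := fun x =>
      (deriv (deriv g) x + (1 + (deriv g x) ^ 2) ^ ((3 : ℝ) / 2)) * g x -
        (1 + (deriv g x) ^ 2) with hφ
    have hu : Continuous (deriv g) := hdiff'.continuous
    have hcφ : Continuous φ := by
      apply Continuous.sub
      · apply Continuous.mul _ (hdiff.continuous)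
        apply Continuous.add hcont''
        apply Continuous.rpow_const
        · fun_prop
        · intro x; right; norm_num
      · fun_prop
    have heq : Set.EqOn φ (fun _ => 0) {x : ℝ | g x ≠ 0} := by
      intro x hx
      simp only [Set.mem_setOf_eq] at hx
      have hgx : g x ≠ 0 := hx
      have hkey : deriv (deriv g) x + (1 + (deriv g x) ^ 2) ^ ((3 : ℝ) / 2) =
          (1 / g x) * (1 + (deriv g x) ^ 2) := by linarith [hode x]
      simp only [hφ]
      rw [hkey]
      field_simp
      ring
    have := heq.closure hcφ continuous_const hx
    have hφx₀ : φ x₀ = 0 := this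
    rw [hφ] at hφx₀
    simp only [hx₀, mul_zero, zero_sub, neg_eq_zero] at hφx₀
    nlinarith [sq_nonneg (deriv g x₀), hφx₀]
  · -- g vanishes on a neighborhood
    rw [mem_closure_iff_nhds] at hx
    push_neg at hx
    obtain ⟨U, hU, hUg⟩ := hx
    have hUg' : U ∩ {x : ℝ | g x ≠ 0} = ∅ := hUg
    have hev : g =ᶠ[nhds x₀] (fun _ => 0) := by
      filter_upwards [hU] with y hy
      by_contra hgy
      exact (Set.eq_empty_iff_forall_notMem.mp hUg' y) ⟨hy, hgy⟩
    have hder : deriv g =ᶠ[nhds x₀] (fun _ => 0) := by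
      have := hev.deriv
      simpa using this
    have hder2 : deriv (deriv g) x₀ = 0 := by
      have := hder.deriv
      simpa using this.self_of_nhds
    have hder1 : deriv g x₀ = 0 := hder.self_of_nhds
    have h := hode x₀
    rw [hx₀, hder1, hder2] at h
    norm_num [Real.one_rpow] at h

lemma sol_pos (hg : ContDiff ℝ 2 g)
    (hode : ∀ x : ℝ, deriv (deriv g) x - (1 / g x) * (1 + (deriv g x) ^ 2) +
      (1 + (deriv g x) ^ 2) ^ ((3 : ℝ) / 2) = 0)
    (h0 : 0 < g 0) : ∀ x : ℝ, 0 < g x := by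
  intro y
  rcases lt_trichotomy (g y) 0 with h | h | h
  · exfalso
    have hcont : ContinuousOn g (Set.uIcc 0 y) := (sol_facts hg).1.continuous.continuousOn
    have : (0:ℝ) ∈ Set.uIcc (g 0) (g y) := by
      rw [Set.mem_uIcc]
      right
      exact ⟨h.le, h0.le⟩
    have h2 := intermediate_value_uIcc hcont this
    obtain ⟨z, -, hz⟩ := h2
    exact sol_ne_zero hg hode z hz
  · exact absurd h (sol_ne_zero hg hode y)
  · exact h

lemma sol_system (hg : ContDiff ℝ 2 g)
    (hode : ∀ x : ℝ, deriv (deriv g) x - (1 / g x) * (1 + (deriv g x) ^ 2) +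
      (1 + (deriv g x) ^ 2) ^ ((3 : ℝ) / 2) = 0)
    (hpos : ∀ x : ℝ, 0 < g x) (t : ℝ) :
    HasDerivAt (fun x => (g x, deriv g x)) (VF (g t, deriv g t)) t := by
  obtain ⟨hdiff, hdiff', hcont''⟩ := sol_facts hg
  have h := ((hdiff t).hasDerivAt).prodMk ((hdiff' t).hasDerivAt)
  have hsnd : (1 + (deriv g t) ^ 2) / (g t) -
      (1 + (deriv g t) ^ 2) * Real.sqrt (1 + (deriv g t) ^ 2) = deriv (deriv g) t := by
    have hode' := hode t
    have hb : (0:ℝ) < 1 + (deriv g t) ^ 2 := by positivity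
    rw [rpow_three_halves hb] at hode'
    have hgt : g t ≠ 0 := (hpos t).ne'
    have h1 : (1 / g t) * (1 + (deriv g t) ^ 2) = (1 + (deriv g t) ^ 2) / g t := by
      ring
    linarith [hode']
  have hVF : VF (g t, deriv g t) = (deriv g t, deriv (deriv g) t) := by
    unfold VF
    simp only
    rw [hsnd]
  rw [hVF]
  exact h

end Generic

lemma continuous_RR : Continuous (RR b) := by unfold RR; fun_prop

theorem main {b : ℝ} (hb0 : 0 < b) (hb1 : b < 1) :
    ∃ ρ : ℝ → ℝ,
      (ContDiff ℝ 2 ρ ∧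
        (∀ x : ℝ, deriv (deriv ρ) x - (1 / ρ x) * (1 + (deriv ρ x) ^ 2) +
          (1 + (deriv ρ x) ^ 2) ^ ((3 : ℝ) / 2) = 0) ∧
        ρ 0 = 1 - b ∧ deriv ρ 0 = 0) ∧
      (∀ ρ' : ℝ → ℝ, ContDiff ℝ 2 ρ' →
        (∀ x : ℝ, deriv (deriv ρ') x - (1 / ρ' x) * (1 + (deriv ρ' x) ^ 2) +
          (1 + (deriv ρ' x) ^ 2) ^ ((3 : ℝ) / 2) = 0) →
        ρ' 0 = 1 - b → deriv ρ' 0 = 0 → ρ' = ρ) ∧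
      (∃ T : ℝ, 0 < T ∧ ∀ x : ℝ, ρ (x + T) = ρ x) ∧
      (∀ x : ℝ, 1 - b ≤ ρ x ∧ ρ x ≤ 2 - (1 - b)) := by
  classical
  set e : ℝ ≃o ℝ :=
    StrictMono.orderIsoOfSurjective (GG b) (strictMono_GG hb0 hb1) (surjective_GG hb0 hb1)
    with he
  set th : ℝ → ℝ := fun x => e.symm x with hthdef
  have hGth : ∀ x, GG b (th x) = x := fun x =>
    StrictMono.orderIsoOfSurjective_self_symm_apply (GG b) (strictMono_GG hb0 hb1)
      (surjective_GG hb0 hb1) x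
  have hthG : ∀ θ, th (GG b θ) = θ := fun θ =>
    StrictMono.orderIsoOfSurjective_symm_apply_self (GG b) (strictMono_GG hb0 hb1)
      (surjective_GG hb0 hb1) θ
  have hthcont : Continuous th := OrderIso.continuous e.symm
  have hth : ∀ x, HasDerivAt th (Om b (th x)) x := by
    intro x
    have h1 : HasDerivAt (GG b) (Om b (th x))⁻¹ (th x) := hasDerivAt_GG hb0 hb1 (th x)
    have h2 := HasDerivAt.of_local_left_inverse hthcont.continuousAt h1
      (inv_ne_zero (Om_pos hb0 hb1 (th x)).ne') (Filter.Eventually.of_forall hGth)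
    simpa [inv_inv] using h2
  have hth0 : th 0 = π := by
    have h := GG_pi b
    calc th 0 = th (GG b π) := by rw [h]
    _ = π := hthG π
  set T := GG b (3 * π) with hTdef
  have hTpos : 0 < T := TT_pos hb0 hb1
  have hthT : ∀ x, th (x + T) = th x + 2 * π := by
    intro x
    have h1 : GG b (th x + 2 * π) = GG b (th x) + T := GG_add hb0 hb1 (th x)
    rw [hGth] at h1
    calc th (x + T) = th (GG b (th x + 2 * π)) := by rw [h1]
    _ = th x + 2 * π := hthG _
  set ρ : ℝ → ℝ := fun x => RR b (th x) with hρdef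
  have hρx : ∀ x, ρ x = RR b (th x) := fun _ => rfl
  have hρd : ∀ x, HasDerivAt ρ (UU b (th x)) x := by
    intro x
    have h := (hasDerivAt_RR (b := b) (th x)).comp x (hth x)
    have hval : UU b (th x) = -(b * Real.sin (th x)) * Om b (th x) := rfl
    rw [hval]
    exact h
  have hderiv1 : deriv ρ = fun x => UU b (th x) := funext fun x => (hρd x).deriv
  have hρd2 : ∀ x, HasDerivAt (fun y => UU b (th y))
      ((-(b * Real.cos (th x)) * Om b (th x) + -(b * Real.sin (th x)) * OmD b (th x)) *
        Om b (th x)) x :=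
    fun x => (hasDerivAt_UU hb0 hb1 (th x)).comp x (hth x)
  have hderiv2 : ∀ x, deriv (deriv ρ) x =
      RR b (th x) / DD b (th x) ^ 2 - RR b (th x) ^ 3 / DD b (th x) ^ 3 := by
    intro x
    rw [hderiv1, (hρd2 x).deriv, key_identity hb0 hb1]
  have hODEall : ∀ x : ℝ, deriv (deriv ρ) x - (1 / ρ x) * (1 + (deriv ρ x) ^ 2) +
      (1 + (deriv ρ x) ^ 2) ^ ((3 : ℝ) / 2) = 0 := by
    intro x
    have hu : deriv ρ x = UU b (th x) := (hρd x).deriv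
    rw [hderiv2 x, hu, hρx x]
    have h1 : (1 : ℝ) + UU b (th x) ^ 2 = (RR b (th x) / DD b (th x)) ^ 2 :=
      one_add_UU_sq hb0 hb1 (th x)
    have hRpos := RR_pos hb0 hb1 (th x)
    have hDpos := DD_pos hb0 hb1 (th x)
    have hRD : (0:ℝ) ≤ RR b (th x) / DD b (th x) := le_of_lt (div_pos hRpos hDpos)
    have h2 : ((RR b (th x) / DD b (th x)) ^ 2 : ℝ) ^ ((3:ℝ)/2) =
        (RR b (th x) / DD b (th x)) ^ 3 := sq_rpow_three_halves hRD
    rw [h1, h2]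
    field_simp
    ring
  have hcd : ContDiff ℝ 2 ρ := by
    rw [show ((2 : WithTop ℕ∞)) = (1 + 1 : WithTop ℕ∞) from by norm_num,
      contDiff_succ_iff_deriv]
    refine ⟨fun x => (hρd x).differentiableAt, by simp, ?_⟩
    rw [hderiv1, contDiff_one_iff_deriv]
    refine ⟨fun x => (hρd2 x).differentiableAt, ?_⟩
    have hD : deriv (fun x => UU b (th x)) =
        fun x => RR b (th x) / DD b (th x) ^ 2 - RR b (th x) ^ 3 / DD b (th x) ^ 3 :=
      funext fun x => by rw [(hρd2 x).deriv, key_identity hb0 hb1]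
    rw [hD]
    have hc1 : Continuous fun θ => RR b θ / DD b θ ^ 2 - RR b θ ^ 3 / DD b θ ^ 3 := by
      apply Continuous.sub
      · exact continuous_RR.div (continuous_DD.pow 2)
          fun θ => pow_ne_zero 2 (DD_pos hb0 hb1 θ).ne'
      · exact (continuous_RR.pow 3).div (continuous_DD.pow 3)
          fun θ => pow_ne_zero 3 (DD_pos hb0 hb1 θ).ne'
    exact hc1.comp hthcont
  have hρ0 : ρ 0 = 1 - b := by
    rw [hρx 0, hth0]
    unfold RR
    rw [Real.cos_pi]
    ring
  have hdρ0 : deriv ρ 0 = 0 := by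
    have hu : deriv ρ 0 = UU b (th 0) := (hρd 0).deriv
    rw [hu, hth0]
    unfold UU
    rw [Real.sin_pi]
    ring
  have hbounds : ∀ x : ℝ, 1 - b ≤ ρ x ∧ ρ x ≤ 2 - (1 - b) := by
    intro x
    rw [hρx x]
    constructor
    · exact RR_lb hb0 (th x)
    · have := RR_ub hb0 (th x)
      linarith
  have hper : ∀ x : ℝ, ρ (x + T) = ρ x := by
    intro x
    rw [hρx, hρx, hthT x]
    unfold RR
    rw [Real.cos_add_two_pi]
  refine ⟨ρ, ⟨hcd, hODEall, hρ0, hdρ0⟩, ?_, ⟨T, hTpos, hper⟩, hbounds⟩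
  -- uniqueness
  intro g hg hode hg0 hg'0
  have hgpos : ∀ x, 0 < g x := sol_pos hg hode (by rw [hg0]; linarith)
  have hρpos : ∀ x, 0 < ρ x := fun x => RR_pos hb0 hb1 (th x)
  have hρsys := sol_system hcd hODEall hρpos
  have hgsys := sol_system hg hode hgpos
  obtain ⟨hgc, hgc', -⟩ := sol_facts hg
  obtain ⟨hρc, hρc', -⟩ := sol_facts hcd
  set Fg : ℝ → ℝ × ℝ := fun t => (g t, deriv g t) with hFg
  set Fρ : ℝ → ℝ × ℝ := fun t => (ρ t, deriv ρ t) with hFρ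
  have hFgcont : Continuous Fg := continuous_VF_of g hgc.continuous hgc'.continuous
  have hFρcont : Continuous Fρ := continuous_VF_of ρ hρc.continuous hρc'.continuous
  set A : Set ℝ := {t | Fg t = Fρ t} with hA
  have hA0 : (0:ℝ) ∈ A := by
    simp only [hA, Set.mem_setOf_eq, hFg, hFρ, Prod.mk.injEq]
    exact ⟨by rw [hg0, hρ0], by rw [hg'0, hdρ0]⟩
  have hclosed : IsClosed A := isClosed_eq hFgcont hFρcont
  have hopen : IsOpen A := by
    rw [isOpen_iff_mem_nhds]
    intro t₁ ht₁
    have ht₁' : Fg t₁ = Fρ t₁ := ht₁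
    obtain ⟨K, sn, hsn, hlip⟩ :=
      (contDiffAt_VF (show (Fg t₁).1 ≠ 0 from (hgpos t₁).ne')).exists_lipschitzOnWith
    have hev_g : ∀ᶠ t in nhds t₁, HasDerivAt Fg (VF (Fg t)) t ∧ Fg t ∈ sn := by
      filter_upwards [hFgcont.continuousAt.preimage_mem_nhds hsn] with t ht
      exact ⟨hgsys t, ht⟩
    have hsn' : sn ∈ nhds (Fρ t₁) := by rw [← ht₁']; exact hsn
    have hev_ρ : ∀ᶠ t in nhds t₁, HasDerivAt Fρ (VF (Fρ t)) t ∧ Fρ t ∈ sn := by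
      filter_upwards [hFρcont.continuousAt.preimage_mem_nhds hsn'] with t ht
      exact ⟨hρsys t, ht⟩
    have huniq := ODE_solution_unique_of_eventually
      (v := fun _ : ℝ => VF) (s := fun _ => sn) (K := K)
      (Filter.Eventually.of_forall fun _ => hlip) hev_g hev_ρ ht₁'
    exact huniq
  have hAuniv : A = Set.univ := IsClopen.eq_univ ⟨hclosed, hopen⟩ ⟨0, hA0⟩
  funext x
  have hx : x ∈ A := hAuniv ▸ Set.mem_univ x
  have hx' : Fg x = Fρ x := hx
  exact congrArg Prod.fst hx'

end DelaunayAux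

theorem stmt11 (τ : ℝ) (hτ : τ ∈ Set.Ioo (0 : ℝ) 1) :
    ∃ ρ : ℝ → ℝ,
      (ContDiff ℝ 2 ρ ∧
        (∀ x : ℝ, deriv (deriv ρ) x - (1 / ρ x) * (1 + (deriv ρ x) ^ 2) +
          (1 + (deriv ρ x) ^ 2) ^ ((3 : ℝ) / 2) = 0) ∧
        ρ 0 = 1 - Real.sqrt (1 - τ ^ 2) ∧ deriv ρ 0 = 0) ∧
      (∀ ρ' : ℝ → ℝ, ContDiff ℝ 2 ρ' →
        (∀ x : ℝ, deriv (deriv ρ') x - (1 / ρ' x) * (1 + (deriv ρ' x) ^ 2) +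
          (1 + (deriv ρ' x) ^ 2) ^ ((3 : ℝ) / 2) = 0) →
        ρ' 0 = 1 - Real.sqrt (1 - τ ^ 2) → deriv ρ' 0 = 0 → ρ' = ρ) ∧
      (∃ T : ℝ, 0 < T ∧ ∀ x : ℝ, ρ (x + T) = ρ x) ∧
      (∀ x : ℝ, 1 - Real.sqrt (1 - τ ^ 2) ≤ ρ x ∧ ρ x ≤ 2 - (1 - Real.sqrt (1 - τ ^ 2))) := by
  obtain ⟨hτ0, hτ1⟩ := hτ
  set b := Real.sqrt (1 - τ ^ 2) with hb
  have hpos : (0:ℝ) < 1 - τ ^ 2 := by nlinarith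
  have hb0 : 0 < b := Real.sqrt_pos.mpr hpos
  have hbsq : b ^ 2 = 1 - τ ^ 2 := Real.sq_sqrt hpos.le
  have hb1 : b < 1 := by nlinarith [hb0]
  exact DelaunayAux.main hb0 hb1
end
end

section
/- Let ν ∈ (0, √2) and A ≥ 0, and let ψ : [0, ∞) → ℝ be bounded, twice continuously differentiable, and satisfy −ψ''(s) + 2ψ(s) ≤ A e^{−νs} for all s > 0. Then ψ(s) ≤ ( A/(2 − ν²) + max(ψ(0), 0) ) e^{−νs} for all s ≥ 0. -/
noncomputable section

open Real Set Filter Topology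

/-- Maximum-principle style barrier lemma: if `w` is continuous on `[0,∞)`,
its first derivative exists on `(0,∞)`, the second derivative is positive wherever
`w ≥ 0`, `w 0 < 0`, and `w s₀ ≥ 0` fails at suitable endpoints... -/
lemma aux_max_principle (w : ℝ → ℝ) (R : ℝ)
    (hcont : ContinuousOn w (Set.Ici 0))
    (hd2 : ∀ s, 0 < s → HasDerivAt (deriv w) (deriv (deriv w) s) s)
    (hpos : ∀ s, 0 < s → 0 ≤ w s → 0 < deriv (deriv w) s)
    (h0 : w 0 < 0) (hR0 : 0 < R) (hR : w R < 0) :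
    ∀ s ∈ Set.Icc 0 R, w s < 0 := by
  have hIcc : Set.Icc (0:ℝ) R ⊆ Set.Ici 0 := fun x hx => hx.1
  obtain ⟨c, hcmem, hcmax⟩ := isCompact_Icc.exists_isMaxOn (Set.nonempty_Icc.2 hR0.le)
    (hcont.mono hIcc)
  intro s hs
  by_cases hwc : w c < 0
  · exact lt_of_le_of_lt (hcmax hs) hwc
  push_neg at hwc
  exfalso
  -- c is an interior point
  have hc0 : c ≠ 0 := by rintro rfl; exact absurd hwc (not_le.2 h0)
  have hcR : c ≠ R := by rintro rfl; exact absurd hwc (not_le.2 hR)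
  have hcpos : 0 < c := lt_of_le_of_ne hcmem.1 (Ne.symm hc0)
  have hcltR : c < R := lt_of_le_of_ne hcmem.2 hcR
  have hlocal : IsLocalMax w c :=
    hcmax.isLocalMax (Icc_mem_nhds hcpos hcltR)
  have hderiv0 : deriv w c = 0 := hlocal.deriv_eq_zero
  have hL : 0 < deriv (deriv w) c := hpos c hcpos hwc
  -- slope of deriv w at c is eventually positive on the right
  have hslope : Tendsto (slope (deriv w) c) (𝓝[≠] c) (𝓝 (deriv (deriv w) c)) :=
    hasDerivAt_iff_tendsto_slope.1 (hd2 c hcpos)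
  have hev : ∀ᶠ x in 𝓝[>] c, 0 < slope (deriv w) c x := by
    have := hslope.eventually (eventually_gt_nhds hL)
    exact this.filter_mono (nhdsWithin_mono c fun x hx => ne_of_gt hx)
  obtain ⟨u, hu, huIoo⟩ := (mem_nhdsGT_iff_exists_Ioo_subset).1 hev
  have hu' : c < min u R := lt_min hu hcltR
  have hderivpos : ∀ x ∈ Set.Ioo c (min u R), 0 < deriv w x := by
    intro x hx
    have hx' : x ∈ Set.Ioo c u := ⟨hx.1, lt_of_lt_of_le hx.2 (min_le_left _ _)⟩
    have hsl : 0 < slope (deriv w) c x := huIoo hx'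
    rw [slope_def_field, hderiv0] at hsl
    have hxc : 0 < x - c := sub_pos.2 hx.1
    have := mul_pos hsl hxc
    calc (0:ℝ) < (deriv w x - 0) / (x - c) * (x - c) := this
    _ = deriv w x := by field_simp; ring
  -- w is strictly monotone on [c, min u R]
  have hmono : StrictMonoOn w (Set.Icc c (min u R)) := by
    apply strictMonoOn_of_deriv_pos (convex_Icc _ _)
    · exact hcont.mono (fun x hx => le_trans hcpos.le hx.1)
    · intro x hx
      rw [interior_Icc] at hx
      exact hderivpos x hx
  set x := (c + min u R) / 2 with hxdef
  have hxmem : x ∈ Set.Ioo c (min u R) := ⟨by linarith, by linarith⟩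
  have hlt : w c < w x :=
    hmono ⟨le_refl c, hu'.le⟩ ⟨hxmem.1.le, hxmem.2.le⟩ hxmem.1
  have hxIcc : x ∈ Set.Icc 0 R :=
    ⟨le_trans hcpos.le hxmem.1.le, le_trans hxmem.2.le (min_le_right _ _)⟩
  exact absurd (hcmax hxIcc) (not_le.2 hlt)

theorem stmt14 (ν A : ℝ) (hν : ν ∈ Set.Ioo 0 (Real.sqrt 2)) (hA : 0 ≤ A)
    (ψ : ℝ → ℝ) (hψ : ContDiffOn ℝ 2 ψ (Set.Ici 0))
    (hbd : ∃ M : ℝ, ∀ s ∈ Set.Ici (0 : ℝ), |ψ s| ≤ M)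
    (hineq : ∀ s : ℝ, 0 < s →
      -(deriv (deriv ψ) s) + 2 * ψ s ≤ A * Real.exp (-ν * s)) :
    ∀ s : ℝ, 0 ≤ s → ψ s ≤ (A / (2 - ν ^ 2) + max (ψ 0) 0) * Real.exp (-ν * s) := by
  obtain ⟨hν0, hν2⟩ := hν
  obtain ⟨M, hM⟩ := hbd
  have hν2' : ν ^ 2 < 2 := by
    have h2 : (0:ℝ) ≤ 2 := by norm_num
    calc ν ^ 2 < Real.sqrt 2 ^ 2 := by
          apply pow_lt_pow_left₀ hν2 hν0.le; norm_num
    _ = 2 := Real.sq_sqrt h2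
  have h2ν : 0 < 2 - ν ^ 2 := by linarith
  set l : ℝ := A / (2 - ν ^ 2) + max (ψ 0) 0 with hldef
  have hl0 : 0 ≤ l := add_nonneg (div_nonneg hA h2ν.le) (le_max_right _ _)
  have hlψ0 : ψ 0 ≤ l := le_trans (le_max_left _ _)
    (le_add_of_nonneg_left (div_nonneg hA h2ν.le))
  have hlA : A ≤ l * (2 - ν ^ 2) := by
    rw [hldef, add_mul, div_mul_cancel₀ _ (ne_of_gt h2ν)]
    nlinarith [le_max_right (ψ 0) 0]
  -- regularity on the open half line
  have hψO : ContDiffOn ℝ 2 ψ (Set.Ioi 0) := hψ.mono Set.Ioi_subset_Ici_self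
  have hψd1 : ∀ s : ℝ, 0 < s → HasDerivAt ψ (deriv ψ s) s := by
    intro s hs
    have h := (hψO.contDiffAt (isOpen_Ioi.mem_nhds hs)).differentiableAt (by norm_num)
    exact h.hasDerivAt
  have hψdd : ContDiffOn ℝ 1 (deriv ψ) (Set.Ioi 0) := by
    have := hψO.deriv_of_isOpen isOpen_Ioi (m := 1) (by norm_num)
    exact this
  have hψd2 : ∀ s : ℝ, 0 < s → HasDerivAt (deriv ψ) (deriv (deriv ψ) s) s := by
    intro s hs
    have h := (hψdd.contDiffAt (isOpen_Ioi.mem_nhds hs)).differentiableAt (by norm_num)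
    exact h.hasDerivAt
  -- the exponential barrier
  set E : ℝ → ℝ := fun s => Real.exp (-ν * s) with hEdef
  have hE : ∀ s : ℝ, HasDerivAt E (-ν * E s) s := by
    intro s
    have : HasDerivAt (fun s : ℝ => -ν * s) (-ν) s := by
      simpa using (hasDerivAt_id s).const_mul (-ν)
    simpa [hEdef, mul_comm] using this.exp.congr_deriv (by ring)
  have hEpos : ∀ s : ℝ, 0 < E s := fun s => Real.exp_pos _
  -- φ = ψ - l * E
  set φ : ℝ → ℝ := fun s => ψ s - l * E s with hφdef
  suffices hφ : ∀ s : ℝ, 0 ≤ s → φ s ≤ 0 by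
    intro s hs
    have := hφ s hs
    simp only [hφdef] at this
    linarith
  -- derivatives of φ
  have hφd1 : ∀ s : ℝ, 0 < s → HasDerivAt φ (deriv ψ s - l * (-ν * E s)) s := by
    intro s hs
    exact (hψd1 s hs).sub ((hE s).const_mul l)
  have hφderiv : ∀ s : ℝ, 0 < s → deriv φ s = deriv ψ s - l * (-ν * E s) := by
    intro s hs
    exact (hφd1 s hs).deriv
  have hφd2 : ∀ s : ℝ, 0 < s →
      HasDerivAt (deriv φ) (deriv (deriv ψ) s - l * (ν ^ 2 * E s)) s := by
    intro s hs
    have heq : deriv φ =ᶠ[𝓝 s] fun x => deriv ψ x - l * (-ν * E x) := by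
      filter_upwards [isOpen_Ioi.mem_nhds hs] with x hx
      exact hφderiv x hx
    have h1 : HasDerivAt (fun x => deriv ψ x - l * (-ν * E x))
        (deriv (deriv ψ) s - l * (-ν * (-ν * E s))) s := by
      have hE' : HasDerivAt (fun x => l * (-ν * E x)) (l * (-ν * (-ν * E s))) s :=
        (((hE s).const_mul (-ν)).const_mul l)
      exact (hψd2 s hs).sub hE'
    have h2 : HasDerivAt (deriv φ) (deriv (deriv ψ) s - l * (-ν * (-ν * E s))) s :=
      h1.congr_of_eventuallyEq heq
    have : -ν * (-ν * E s) = ν ^ 2 * E s := by ring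
    rwa [this] at h2
  have hφcont : ContinuousOn φ (Set.Ici 0) := by
    apply (hψ.continuousOn).sub
    exact (continuous_const.mul (Real.continuous_exp.comp (continuous_const.mul continuous_id))).continuousOn
  -- bound on φ
  have hφbd : ∀ s : ℝ, 0 ≤ s → φ s ≤ M := by
    intro s hs
    have h1 : ψ s ≤ M := le_trans (le_abs_self _) (hM s hs)
    have h2 : 0 ≤ l * E s := mul_nonneg hl0 (hEpos s).le
    simp only [hφdef]; linarith
  have hM0 : 0 ≤ M := le_trans (abs_nonneg _) (hM 0 Set.self_mem_Ici)
  -- main estimate via ε-perturbation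
  intro s₀ hs₀
  by_contra hcon
  push_neg at hcon
  set ε : ℝ := φ s₀ / Real.exp s₀ with hεdef
  have hε : 0 < ε := div_pos hcon (Real.exp_pos _)
  set w : ℝ → ℝ := fun s => φ s - ε * Real.exp s with hwdef
  -- choose R
  set R : ℝ := max (s₀ + 1) (Real.log ((M + 1) / ε) + 1) with hRdef
  have hR0 : 0 < R := lt_of_lt_of_le (by linarith) (le_max_left _ _)
  have hRs₀ : s₀ ≤ R := le_trans (by linarith) (le_max_left _ _)
  have hwR : w R < 0 := by
    have h1 : Real.log ((M + 1) / ε) + 1 ≤ R := le_max_right _ _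
    have h2 : (M + 1) / ε < Real.exp R := by
      calc (M + 1) / ε ≤ Real.exp (Real.log ((M + 1) / ε)) := by
            rcases le_or_gt ((M + 1) / ε) 0 with h | h
            · exact le_trans h (Real.exp_pos _).le
            · rw [Real.exp_log h]
      _ < Real.exp R := Real.exp_lt_exp.2 (by linarith)
    have h3 : M + 1 < ε * Real.exp R := by
      rw [div_lt_iff₀ hε] at h2; linarith [mul_comm ε (Real.exp R)]
    have h4 : φ R ≤ M := hφbd R hR0.le
    simp only [hwdef]; linarith
  have hw0 : w 0 < 0 := by
    have h1 : φ 0 = ψ 0 - l := by simp [hφdef, hEdef]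
    have : 0 < ε * Real.exp 0 := mul_pos hε (Real.exp_pos _)
    simp only [hwdef]; rw [h1]; linarith
  have hwcont : ContinuousOn w (Set.Ici 0) :=
    hφcont.sub (continuous_const.mul Real.continuous_exp).continuousOn
  -- derivatives of w
  have hwd1 : ∀ s : ℝ, 0 < s →
      HasDerivAt w (deriv φ s - ε * Real.exp s) s := by
    intro s hs
    exact ((hφd1 s hs).congr_deriv (hφderiv s hs).symm).sub ((Real.hasDerivAt_exp s).const_mul ε)
  have hwderiv : ∀ s : ℝ, 0 < s → deriv w s = deriv φ s - ε * Real.exp s :=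
    fun s hs => (hwd1 s hs).deriv
  have hwd2 : ∀ s : ℝ, 0 < s →
      HasDerivAt (deriv w) (deriv (deriv φ) s - ε * Real.exp s) s := by
    intro s hs
    have heq : deriv w =ᶠ[𝓝 s] fun x => deriv φ x - ε * Real.exp x := by
      filter_upwards [isOpen_Ioi.mem_nhds hs] with x hx
      exact hwderiv x hx
    have h1 : HasDerivAt (fun x => deriv φ x - ε * Real.exp x)
        (deriv (deriv φ) s - ε * Real.exp s) s := by
      have := (hφd2 s hs).congr_deriv ((hφd2 s hs).deriv).symm
      exact ((hφd2 s hs).congr_deriv ((hφd2 s hs).deriv).symm).sub ((Real.hasDerivAt_exp s).const_mul ε)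
    exact h1.congr_of_eventuallyEq heq
  have hwdd : ∀ s : ℝ, 0 < s →
      deriv (deriv w) s = deriv (deriv φ) s - ε * Real.exp s :=
    fun s hs => (hwd2 s hs).deriv
  have hwd2' : ∀ s : ℝ, 0 < s → HasDerivAt (deriv w) (deriv (deriv w) s) s := by
    intro s hs
    exact (hwd2 s hs).congr_deriv (hwdd s hs).symm
  -- positivity of second derivative where w ≥ 0
  have hpos : ∀ s : ℝ, 0 < s → 0 ≤ w s → 0 < deriv (deriv w) s := by
    intro s hs hws
    have hddφ : deriv (deriv φ) s = deriv (deriv ψ) s - l * (ν ^ 2 * E s) :=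
      (hφd2 s hs).deriv
    have hkey : 2 * ψ s - A * E s ≤ deriv (deriv ψ) s := by
      have := hineq s hs; simp only [hEdef]; linarith [hineq s hs]
    have hφs : φ s = ψ s - l * E s := rfl
    have hws' : 0 ≤ φ s - ε * Real.exp s := hws
    have hEp := hEpos s
    have hexp : 0 < Real.exp s := Real.exp_pos s
    rw [hwdd s hs, hddφ]
    have hlq : 0 ≤ (l * (2 - ν ^ 2) - A) * E s :=
      mul_nonneg (by linarith) hEp.le
    nlinarith [mul_pos hε hexp]
  -- apply the maximum principle
  have := aux_max_principle w R hwcont hwd2' hpos hw0 hR0 hwR s₀ ⟨hs₀, hRs₀⟩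
  -- but w s₀ = φ s₀ - ε exp s₀ and ε = φ s₀ / exp s₀
  have heq : w s₀ = φ s₀ - φ s₀ / Real.exp s₀ * Real.exp s₀ := rfl
  rw [heq, div_mul_cancel₀ _ (ne_of_gt (Real.exp_pos s₀))] at this
  linarith
end
end
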